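/- arXiv:2408.10968 — 5 statements merged into one kernel-verified Lean document; each statement's English description precedes it below -/
import Mathlib

section
/- Let H be a complex Hilbert space and T a densely defined closed simple symmetric operator in H whose deficiency indices are equal and nonzero (the Hilbert dimensions of ker(T* − i) and ker(T* + i) coincide and are at least 1). Then a number λ₀ ∈ ℂ is a point of regular type for T if and only if there exists a self-adjoint extension T̃ of T such that the map x ↦ T̃x − λ₀x is a bijection from D(T̃) onto H. Equivalently, the spectral kernel of T (the complement of the set of points of regular type) equals the intersection of the spectra of all self-adjoint extensions of T. -/
noncomputable section

open Complex

variable {H : Type*} [NormedAddCommGroup H] [InnerProductSpace ℂ H] [CompleteSpace H]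

/-- The deficiency subspace `ker(T* − λ) = {x ∈ D(T*) : T*x = λx}` of `H`. -/
def defect (T : H →ₗ.[ℂ] H) (lam : ℂ) : Submodule ℂ H :=
  Submodule.map T.adjoint.domain.subtype
    (LinearMap.ker (T.adjoint.toFun - lam • T.adjoint.domain.subtype))

namespace Statement14Aux

local notation "⟪" x ", " y "⟫" => @inner ℂ _ _ x y

variable (T : H →ₗ.[ℂ] H)

/-- Characterization of the graph of the adjoint. -/
theorem mem_adjoint_graph_iff (hS : Dense (T.domain : Set H)) (p : H × H) :
    p ∈ T.adjoint.graph ↔ ∀ x : T.domain, ⟪p.2, (x : H)⟫ = ⟪p.1, T x⟫ := by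
  constructor
  · intro hp x
    rw [LinearPMap.mem_graph_iff] at hp
    obtain ⟨y, hy⟩ := hp
    have h1 : p.1 = (y : H) := hy.1.symm
    have h2 : p.2 = T.adjoint y := hy.2.symm
    rw [h1, h2]
    exact LinearPMap.adjoint_isFormalAdjoint hS y x
  · intro h
    have hd : p.1 ∈ T.adjoint.domain :=
      LinearPMap.mem_adjoint_domain_of_exists _ ⟨p.2, h⟩
    have hval : T.adjoint ⟨p.1, hd⟩ = p.2 :=
      LinearPMap.adjoint_apply_eq hS ⟨p.1, hd⟩ h
    rw [LinearPMap.mem_graph_iff]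
    exact ⟨⟨p.1, hd⟩, rfl, hval⟩

theorem adjoint_graph_closed (hS : Dense (T.domain : Set H)) :
    IsClosed (T.adjoint.graph : Set (H × H)) := by
  have : (T.adjoint.graph : Set (H × H)) =
      ⋂ x : T.domain, {p : H × H | ⟪p.2, (x : H)⟫ = ⟪p.1, T x⟫} := by
    ext p
    simp only [Set.mem_iInter, Set.mem_setOf_eq, SetLike.mem_coe]
    exact mem_adjoint_graph_iff T hS p
  rw [this]
  exact isClosed_iInter fun x => isClosed_eq
    (Continuous.inner continuous_snd continuous_const)
    (Continuous.inner continuous_fst continuous_const)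

/-- Range of `T - mu` is closed when `T` is closed and `mu` is a point of regular type. -/
theorem range_closed (hclosed : IsClosed (T.graph : Set (H × H))) (mu : ℂ) (c : ℝ) (hc : 0 < c)
    (hb : ∀ x : T.domain, c * ‖(x : H)‖ ≤ ‖T x - mu • (x : H)‖) :
    IsClosed ((LinearMap.range (T.toFun - mu • T.domain.subtype) : Submodule ℂ H) : Set H) := by
  set F : T.domain →ₗ[ℂ] H := T.toFun - mu • T.domain.subtype with hFdef
  have hFapp : ∀ x : T.domain, F x = T x - mu • (x : H) := fun x => rfl
  have hbF : ∀ x : T.domain, c * ‖(x : H)‖ ≤ ‖F x‖ := fun x => by rw [hFapp]; exact hb x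
  apply IsSeqClosed.isClosed
  intro u y hu huy
  choose x hx using hu
  have hxC : CauchySeq fun n => (x n : H) := by
    rw [Metric.cauchySeq_iff]
    intro ε hε
    have hCu : CauchySeq u := huy.cauchySeq
    rw [Metric.cauchySeq_iff] at hCu
    obtain ⟨N, hN⟩ := hCu (c * ε) (by positivity)
    refine ⟨N, fun m hm n hn => ?_⟩
    have h1 : c * ‖(x m : H) - (x n : H)‖ ≤ ‖u m - u n‖ := by
      have h2 := hbF (x m - x n)
      rw [map_sub, hx, hx] at h2
      simpa using h2
    have h3 : ‖(x m : H) - (x n : H)‖ ≤ c⁻¹ * ‖u m - u n‖ := by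
      rw [← mul_le_mul_iff_right₀ hc, ← mul_assoc, mul_inv_cancel₀ hc.ne', one_mul]
      exact h1
    have h4 : ‖u m - u n‖ < c * ε := by
      rw [← dist_eq_norm]
      exact hN m hm n hn
    rw [dist_eq_norm]
    calc ‖(x m : H) - (x n : H)‖ ≤ c⁻¹ * ‖u m - u n‖ := h3
      _ < c⁻¹ * (c * ε) := by
          apply mul_lt_mul_of_pos_left h4 (by positivity)
      _ = ε := by field_simp
  obtain ⟨x₀, hx₀⟩ := cauchySeq_tendsto_of_complete hxC
  have hT : ∀ n, T (x n) = u n + mu • (x n : H) := by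
    intro n
    have := hFapp (x n)
    rw [hx] at this
    rw [this]; module
  have htend : Filter.Tendsto (fun n => T (x n)) Filter.atTop (nhds (y + mu • x₀)) := by
    simp only [hT]
    exact huy.add (hx₀.const_smul mu)
  have hpair : Filter.Tendsto (fun n => ((x n : H), T (x n))) Filter.atTop
      (nhds (x₀, y + mu • x₀)) := hx₀.prodMk_nhds htend
  have hmem : (x₀, y + mu • x₀) ∈ T.graph := by
    have hg : ∀ n, ((x n : H), T (x n)) ∈ (T.graph : Set (H × H)) :=
      fun n => T.mem_graph (x n)
    exact hclosed.mem_of_tendsto hpair (Filter.Eventually.of_forall hg)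
  rw [LinearPMap.mem_graph_iff] at hmem
  obtain ⟨v, hv1, hv2⟩ := hmem
  refine ⟨v, ?_⟩
  rw [hFapp, hv2, hv1]
  module

/-- Identification of the defect subspace as an orthogonal complement of a range. -/
theorem defect_eq (hdense : Dense (T.domain : Set H)) (mu : ℂ) :
    defect T mu =
      (LinearMap.range (T.toFun - (starRingEnd ℂ mu) • T.domain.subtype))ᗮ := by
  have hGapp : ∀ w : T.domain,
      (T.toFun - (starRingEnd ℂ mu) • T.domain.subtype) w
        = T w - (starRingEnd ℂ mu) • (w : H) := fun w => rfl
  ext y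
  constructor
  · intro hy
    obtain ⟨x, hker, hxy⟩ := Submodule.mem_map.mp hy
    rw [LinearMap.mem_ker, LinearMap.sub_apply, LinearMap.smul_apply, sub_eq_zero] at hker
    have hA : T.adjoint x = mu • (x : H) := hker
    rw [Submodule.mem_orthogonal']
    rintro u ⟨w, rfl⟩
    rw [hGapp, inner_sub_right, inner_smul_right, ← hxy]
    have h1 : ⟪(x : H), T w⟫ = ⟪T.adjoint x, (w : H)⟫ :=
      (LinearPMap.adjoint_isFormalAdjoint hdense x w).symm
    rw [Submodule.coe_subtype, h1, hA, inner_smul_left]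
    ring
  · intro hy
    rw [Submodule.mem_orthogonal'] at hy
    have key : ∀ w : T.domain, ⟪mu • y, (w : H)⟫ = ⟪y, T w⟫ := by
      intro w
      have h0 := hy _ ⟨w, rfl⟩
      rw [hGapp, inner_sub_right, inner_smul_right, sub_eq_zero] at h0
      rw [inner_smul_left, ← h0]
    have hd : y ∈ T.adjoint.domain :=
      LinearPMap.mem_adjoint_domain_of_exists y ⟨mu • y, key⟩
    have hval : T.adjoint ⟨y, hd⟩ = mu • y :=
      LinearPMap.adjoint_apply_eq hdense ⟨y, hd⟩ key
    refine Submodule.mem_map.mpr ⟨⟨y, hd⟩, ?_, rfl⟩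
    rw [LinearMap.mem_ker, LinearMap.sub_apply, LinearMap.smul_apply, sub_eq_zero]
    exact hval

/-- The key abstraction: a self-adjoint restriction of `T.adjoint` whose graph is
parametrized by bounded operators `C`, `E`, such that `E - lam0 • C` is bijective. -/
theorem key (hdense : Dense (T.domain : Set H)) (lam0 : ℂ)
    (C E : H →L[ℂ] H)
    (hCinj : Function.Injective C)
    (hext : ∀ x : T.domain, ∃ z : H, C z = (x : H) ∧ E z = T x)
    (hsym : ∀ z w : H, ⟪E z, C w⟫ = ⟪C z, E w⟫)
    (hadj : ∀ v vs : H, (∀ z, ⟪vs, C z⟫ = ⟪v, E z⟫) → ∃ z, C z = v ∧ E z = vs)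
    (hGbij : Function.Bijective fun z : H => E z - lam0 • C z) :
    ∃ D : Submodule ℂ H, T.domain ≤ D ∧ D ≤ T.adjoint.domain ∧
      (T.adjoint.domRestrict D).adjoint = T.adjoint.domRestrict D ∧
      ∀ y : H, ∃! x : T.adjoint.domain,
        (x : H) ∈ D ∧ T.adjoint x - lam0 • (x : H) = y := by
  classical
  set Cl : H →ₗ[ℂ] H := (C : H →ₗ[ℂ] H) with hCldef
  have hCinj' : Function.Injective Cl := hCinj
  set D : Submodule ℂ H := LinearMap.range Cl with hDdef
  set eqv : H ≃ₗ[ℂ] D := LinearEquiv.ofInjective Cl hCinj' with heqv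
  have memD : ∀ z : H, C z ∈ D := fun z => ⟨z, rfl⟩
  have hCeqv : ∀ p : D, C (eqv.symm p) = (p : H) := by
    intro p
    conv_rhs => rw [← eqv.apply_symm_apply p]
    rw [heqv]
    exact (LinearEquiv.ofInjective_apply Cl (eqv.symm p)).symm
  set Ttil : H →ₗ.[ℂ] H :=
    ⟨D, (E : H →ₗ[ℂ] H).comp eqv.symm.toLinearMap⟩ with hTtildef
  have hTtilApply : ∀ p : Ttil.domain, Ttil p = E (eqv.symm p) := fun _ => rfl
  have hTtilApply' : ∀ (z : H) (hz : C z ∈ Ttil.domain), Ttil ⟨C z, hz⟩ = E z := by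
    intro z hz
    have h1 : C (eqv.symm (⟨C z, hz⟩ : D)) = C z := hCeqv ⟨C z, hz⟩
    rw [hTtilApply, hCinj h1]
  have hTD : T.domain ≤ D := by
    intro v hv
    obtain ⟨z, hz1, _⟩ := hext ⟨v, hv⟩
    exact ⟨z, hz1⟩
  have hDdense : Dense (D : Set H) :=
    hdense.mono (by exact_mod_cast hTD)
  have hTtilDense : Dense (Ttil.domain : Set H) := hDdense
  have hFormal : T.IsFormalAdjoint Ttil := by
    intro x y
    obtain ⟨w, hw1, hw2⟩ := hext x
    have hy : (y : H) = C (eqv.symm y) := (hCeqv y).symm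
    rw [hTtilApply, ← hw2, hy, ← hw1]
    exact hsym w (eqv.symm y)
  have hLeA : Ttil ≤ T.adjoint := hFormal.le_adjoint hdense
  have hSelfFormal : Ttil.IsFormalAdjoint Ttil := by
    intro x y
    have hx : (x : H) = C (eqv.symm x) := (hCeqv x).symm
    have hy : (y : H) = C (eqv.symm y) := (hCeqv y).symm
    rw [hTtilApply, hTtilApply, hx, hy]
    exact hsym _ _
  have hle1 : Ttil ≤ Ttil.adjoint := hSelfFormal.le_adjoint hTtilDense
  have hle2 : Ttil.adjoint ≤ Ttil := by
    constructor
    · intro v hv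
      have hv' : ∀ z : H, ⟪Ttil.adjoint ⟨v, hv⟩, C z⟫ = ⟪v, E z⟫ := by
        intro z
        have h0 := LinearPMap.adjoint_isFormalAdjoint hTtilDense
          (⟨v, hv⟩ : Ttil.adjoint.domain) ⟨C z, memD z⟩
        rw [hTtilApply'] at h0
        exact h0
      obtain ⟨z, hz1, _⟩ := hadj v (Ttil.adjoint ⟨v, hv⟩) hv'
      exact ⟨z, hz1⟩
    · intro x y hxy
      have hv' : ∀ z : H, ⟪Ttil.adjoint x, C z⟫ = ⟪(x : H), E z⟫ := by
        intro z
        have h0 := LinearPMap.adjoint_isFormalAdjoint hTtilDense x ⟨C z, memD z⟩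
        rw [hTtilApply'] at h0
        exact h0
      obtain ⟨z, hz1, hz2⟩ := hadj (x : H) (Ttil.adjoint x) hv'
      have hyz : (y : H) = C z := by rw [← hxy, ← hz1]
      have : Ttil y = E z := by
        have h1 : C (eqv.symm y) = C z := by rw [hCeqv y, hyz]
        rw [hTtilApply, hCinj h1]
      rw [this, hz2]
  have hsa : Ttil.adjoint = Ttil := le_antisymm hle2 hle1
  have hDA : D ≤ T.adjoint.domain := hLeA.1
  have hDR : T.adjoint.domRestrict D = Ttil := by
    have hdom : (T.adjoint.domRestrict D).domain = Ttil.domain := by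
      rw [LinearPMap.domRestrict_domain]
      exact inf_eq_left.mpr hDA
    apply LinearPMap.ext hdom
    intro x hx1 hx2
    have hyA : x ∈ T.adjoint.domain := hDA hx2
    have h1 : T.adjoint.domRestrict D ⟨x, hx1⟩ = T.adjoint ⟨x, hyA⟩ :=
      LinearPMap.domRestrict_apply rfl
    have h2 : Ttil ⟨x, hx2⟩ = T.adjoint ⟨x, hyA⟩ := hLeA.2 rfl
    rw [h1, h2]
  refine ⟨D, hTD, hDA, ?_, ?_⟩
  · rw [hDR]; exact hsa
  · intro y
    obtain ⟨z, hz⟩ := hGbij.surjective y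
    simp only at hz
    have hAval : ∀ (z' : H) (hx : C z' ∈ T.adjoint.domain),
        T.adjoint ⟨C z', hx⟩ = E z' := by
      intro z' hx
      have h2 : Ttil ⟨C z', memD z'⟩ = T.adjoint ⟨C z', hx⟩ := hLeA.2 rfl
      rw [← h2, hTtilApply']
    refine ⟨⟨C z, hDA (memD z)⟩, ⟨memD z, ?_⟩, ?_⟩
    · rw [hAval z (hDA (memD z))]
      exact hz
    · rintro x' ⟨hx'D, hx'val⟩
      obtain ⟨z', hz'⟩ := hx'D
      have hx'c : (x' : H) = C z' := hz'.symm
      have hA : T.adjoint x' = E z' := by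
        have : x' = ⟨C z', by rw [← hx'c]; exact x'.2⟩ := Subtype.ext hx'c
        rw [this, hAval]
      have hGz' : E z' - lam0 • C z' = y := by
        rw [← hA, ← hx'c]
        exact hx'val
      have hz'z : z' = z := hGbij.injective (by show E z' - lam0 • C z' = E z - lam0 • C z; rw [hGz', hz])
      apply Subtype.ext
      rw [hx'c, hz'z]

theorem le_inv_mul {c a b : ℝ} (hc : 0 < c) (h : c * a ≤ b) : a ≤ c⁻¹ * b := by
  rw [← mul_le_mul_iff_right₀ hc, ← mul_assoc, mul_inv_cancel₀ hc.ne', one_mul]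
  exact h

/-- The real case: Krein-type construction via a bounded self-adjoint extension of the
inverse of `T - lam0`. -/
theorem real_case (hdense : Dense (T.domain : Set H))
    (hclosed : IsClosed (T.graph : Set (H × H)))
    (hsymm : ∀ x y : T.domain, ⟪T x, (y : H)⟫ = ⟪(x : H), T y⟫)
    (lam0 : ℂ) (hre : lam0.im = 0)
    (c : ℝ) (hc : 0 < c) (hb : ∀ x : T.domain, c * ‖(x : H)‖ ≤ ‖T x - lam0 • (x : H)‖) :
    ∃ D : Submodule ℂ H, T.domain ≤ D ∧ D ≤ T.adjoint.domain ∧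
      (T.adjoint.domRestrict D).adjoint = T.adjoint.domRestrict D ∧
      ∀ y : H, ∃! x : T.adjoint.domain,
        (x : H) ∈ D ∧ T.adjoint x - lam0 • (x : H) = y := by
  have hconj : (starRingEnd ℂ) lam0 = lam0 := Complex.conj_eq_iff_im.mpr hre
  set F : T.domain →ₗ[ℂ] H := T.toFun - lam0 • T.domain.subtype with hFdef
  have hFapp : ∀ x : T.domain, F x = T x - lam0 • (x : H) := fun _ => rfl
  have hbF : ∀ x : T.domain, c * ‖(x : H)‖ ≤ ‖F x‖ := fun x => hb x
  have hFinj : Function.Injective F := by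
    intro a b hab
    have h0 : F (a - b) = 0 := by rw [map_sub, hab, sub_self]
    have h2 := hbF (a - b)
    rw [h0, norm_zero] at h2
    have h3 : ‖((a - b : T.domain) : H)‖ = 0 := by
      nlinarith [norm_nonneg ((a - b : T.domain) : H)]
    have h5 : ((a - b : T.domain) : H) = 0 := norm_eq_zero.mp h3
    have h6 : a - b = 0 := Subtype.ext (by simpa using h5)
    rwa [sub_eq_zero] at h6
  set R0 : Submodule ℂ H := LinearMap.range F with hR0def
  have hRclosed : IsClosed (R0 : Set H) := range_closed T hclosed lam0 c hc hb
  haveI : CompleteSpace R0 := hRclosed.completeSpace_coe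
  set eqv : T.domain ≃ₗ[ℂ] R0 := LinearEquiv.ofInjective F hFinj with heqvdef
  have hcoe : ∀ y : R0, F (eqv.symm y) = (y : H) := by
    intro y
    conv_rhs => rw [← eqv.apply_symm_apply y]
    exact (LinearEquiv.ofInjective_apply F (eqv.symm y)).symm
  have hcoe' : ∀ x : T.domain, ((eqv x : R0) : H) = F x := fun x =>
    LinearEquiv.ofInjective_apply F x
  set S0 : R0 →ₗ[ℂ] H := T.domain.subtype.comp eqv.symm.toLinearMap with hS0def
  have hS0app : ∀ y : R0, S0 y = ((eqv.symm y : T.domain) : H) := fun _ => rfl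
  have hS0bound : ∀ y : R0, ‖S0 y‖ ≤ c⁻¹ * ‖y‖ := by
    intro y
    apply le_inv_mul hc
    rw [hS0app]
    calc c * ‖((eqv.symm y : T.domain) : H)‖ ≤ ‖F (eqv.symm y)‖ := hbF _
      _ = ‖(y : H)‖ := by rw [hcoe]
      _ = ‖y‖ := rfl
  set S : R0 →L[ℂ] H := S0.mkContinuous c⁻¹ hS0bound with hSdef
  have hSapp : ∀ y : R0, S y = ((eqv.symm y : T.domain) : H) := fun _ => rfl
  set P : H →L[ℂ] R0 := Submodule.orthogonalProjectionOnto R0 with hPdef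
  set Pc : H →L[ℂ] H := R0.subtypeL.comp P with hPcdef
  set Qc : H →L[ℂ] H := ContinuousLinearMap.id ℂ H - Pc with hQcdef
  set sig : H →L[ℂ] H := S.comp P with hsigdef
  set siga : H →L[ℂ] H := ContinuousLinearMap.adjoint sig with hsigadef
  set Sh : H →L[ℂ] H := sig + siga.comp Qc with hShdef
  have hdec : ∀ y : H, Pc y + Qc y = y := by
    intro y; rw [hQcdef]; simp
  have hPR : ∀ u : R0, P (u : H) = u := fun u =>
    Submodule.orthogonalProjectionOnto_mem_subspace_eq_self u
  have hQR : ∀ u : R0, Qc (u : H) = 0 := by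
    intro u
    rw [hQcdef]
    simp only [ContinuousLinearMap.sub_apply, ContinuousLinearMap.id_apply, hPcdef,
      ContinuousLinearMap.comp_apply, hPR u, Submodule.subtypeL_apply, sub_self]
  have hShR : ∀ u : R0, Sh (u : H) = S u := by
    intro u
    rw [hShdef]
    simp only [ContinuousLinearMap.add_apply, ContinuousLinearMap.comp_apply, hsigdef,
      hQR u, map_zero, add_zero, hPR u]
  have hSsym : ∀ u v : R0, ⟪(S u : H), (v : H)⟫ = ⟪(u : H), S v⟫ := by
    intro u v
    rw [hSapp, hSapp]
    conv_lhs => rw [← hcoe v]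
    conv_rhs => rw [← hcoe u]
    rw [hFapp, hFapp, inner_sub_right, inner_smul_right, inner_sub_left, inner_smul_left,
      hconj, hsymm]
  have hShsym : ∀ x y : H, ⟪Sh x, y⟫ = ⟪x, Sh y⟫ := by
    intro x y
    have hL : ⟪Sh x, y⟫ = ⟪sig x, y⟫ + ⟪Qc x, sig y⟫ := by
      rw [hShdef]
      simp only [ContinuousLinearMap.add_apply, ContinuousLinearMap.comp_apply]
      rw [inner_add_left, hsigadef, ContinuousLinearMap.adjoint_inner_left]
    have hR : ⟪x, Sh y⟫ = ⟪x, sig y⟫ + ⟪sig x, Qc y⟫ := by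
      rw [hShdef]
      simp only [ContinuousLinearMap.add_apply, ContinuousLinearMap.comp_apply]
      rw [inner_add_right, hsigadef, ContinuousLinearMap.adjoint_inner_right]
    have hsplit1 : ⟪sig x, y⟫ = ⟪sig x, Pc y⟫ + ⟪sig x, Qc y⟫ := by
      rw [← inner_add_right, hdec]
    have hsplit2 : ⟪x, sig y⟫ = ⟪Pc x, sig y⟫ + ⟪Qc x, sig y⟫ := by
      rw [← inner_add_left, hdec]
    have hcore : ⟪sig x, Pc y⟫ = ⟪Pc x, sig y⟫ := by
      rw [hsigdef, hPcdef]
      simp only [ContinuousLinearMap.comp_apply, Submodule.subtypeL_apply]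
      exact hSsym (P x) (P y)
    rw [hL, hR, hsplit1, hsplit2, hcore]
    ring
  have hShF : ∀ x : T.domain, Sh (T x - lam0 • (x : H)) = (x : H) := by
    intro x
    have h1 : T x - lam0 • (x : H) = ((eqv x : R0) : H) := by rw [hcoe', hFapp]
    rw [h1, hShR, hSapp, eqv.symm_apply_apply]
  have hShzero : ∀ z : H, Sh z = 0 → z = 0 := by
    intro z hz
    have hinner : ∀ x : T.domain, ⟪z, (x : H)⟫ = 0 := by
      intro x
      rw [← hShF x, ← hShsym, hz, inner_zero_left]
    exact hdense.eq_of_inner_left ℂ fun v hv => by rw [inner_zero_left]; exact hinner ⟨v, hv⟩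
  have hCinj : Function.Injective Sh := by
    intro a b hab
    have h0 : Sh (a - b) = 0 := by rw [map_sub, hab, sub_self]
    have := hShzero _ h0
    rwa [sub_eq_zero] at this
  set E : H →L[ℂ] H := lam0 • Sh + ContinuousLinearMap.id ℂ H with hEdef
  have hEapp : ∀ z : H, E z = lam0 • Sh z + z := fun _ => rfl
  apply key T hdense lam0 Sh E hCinj
  · intro x
    refine ⟨T x - lam0 • (x : H), hShF x, ?_⟩
    rw [hEapp, hShF]
    module
  · intro z w
    rw [hEapp, hEapp, inner_add_left, inner_add_right, inner_smul_left, inner_smul_right,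
      hconj, hShsym z w]
  · intro v vs h
    have h2 : ∀ z : H, ⟪Sh vs - lam0 • Sh v - v, z⟫ = 0 := by
      intro z
      have h3 := h z
      rw [hEapp, inner_add_right, inner_smul_right, ← hShsym vs z, ← hShsym v z] at h3
      rw [inner_sub_left, inner_sub_left, inner_smul_left, hconj, h3]
      ring
    have h3 : Sh vs - lam0 • Sh v - v = 0 := by
      have := h2 (Sh vs - lam0 • Sh v - v)
      rwa [inner_self_eq_zero] at this
    have h4 : Sh vs - lam0 • Sh v = v := by rwa [sub_eq_zero] at h3
    refine ⟨vs - lam0 • v, ?_, ?_⟩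
    · rw [map_sub, map_smul]; exact h4
    · rw [hEapp, map_sub, map_smul, h4]; module
  · have hid : (fun z : H => E z - lam0 • Sh z) = fun z : H => z := by
      funext z
      rw [hEapp]
      module
    rw [hid]
    exact Function.bijective_id

theorem unit_bijective (u : (H →L[ℂ] H)ˣ) :
    Function.Bijective ⇑(u : H →L[ℂ] H) := by
  refine Function.bijective_iff_has_inverse.mpr
    ⟨⇑((u⁻¹ : (H →L[ℂ] H)ˣ) : H →L[ℂ] H), ?_, ?_⟩
  · intro x
    calc ((u⁻¹ : (H →L[ℂ] H)ˣ) : H →L[ℂ] H) ((u : H →L[ℂ] H) x)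
        = (((u⁻¹ : (H →L[ℂ] H)ˣ) : H →L[ℂ] H) * (u : H →L[ℂ] H)) x := rfl
      _ = x := by rw [u.inv_mul]; rfl
  · intro x
    calc (u : H →L[ℂ] H) (((u⁻¹ : (H →L[ℂ] H)ˣ) : H →L[ℂ] H) x)
        = (((u : H →L[ℂ] H)) * ((u⁻¹ : (H →L[ℂ] H)ˣ) : H →L[ℂ] H)) x := rfl
      _ = x := by rw [u.mul_inv]; rfl

theorem smul_bijective {a : ℂ} (ha : a ≠ 0) :
    Function.Bijective fun z : H => a • z :=
  ⟨fun x y h => by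
    have := congrArg (fun w => a⁻¹ • w) h
    simpa [smul_smul, inv_mul_cancel₀ ha] using this,
   fun y => ⟨a⁻¹ • y, by simp [smul_smul, mul_inv_cancel₀ ha]⟩⟩

theorem Ine_of_im_neg {lam0 : ℂ} (h : lam0.im < 0) : Complex.I - lam0 ≠ 0 := by
  intro h0
  have h1 := congrArg Complex.im h0
  simp only [Complex.sub_im, Complex.I_im, Complex.zero_im] at h1
  linarith

theorem Ine_of_im_pos {lam0 : ℂ} (h : 0 < lam0.im) : Complex.I + lam0 ≠ 0 := by
  intro h0
  have h1 := congrArg Complex.im h0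
  simp only [Complex.add_im, Complex.I_im, Complex.zero_im] at h1
  linarith

theorem normsq_I_add (lam0 : ℂ) :
    ‖Complex.I + lam0‖ ^ 2 = lam0.re ^ 2 + (1 + lam0.im) ^ 2 := by
  rw [Complex.sq_norm, Complex.normSq_apply]
  simp only [Complex.add_re, Complex.add_im, Complex.I_re, Complex.I_im]
  ring

theorem normsq_I_sub (lam0 : ℂ) :
    ‖Complex.I - lam0‖ ^ 2 = lam0.re ^ 2 + (1 - lam0.im) ^ 2 := by
  rw [Complex.sq_norm, Complex.normSq_apply]
  simp only [Complex.sub_re, Complex.sub_im, Complex.I_re, Complex.I_im]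
  ring

theorem normIlt_of_im_neg {lam0 : ℂ} (h : lam0.im < 0) :
    ‖Complex.I + lam0‖ < ‖Complex.I - lam0‖ := by
  have h1 := normsq_I_add lam0
  have h2 := normsq_I_sub lam0
  nlinarith [norm_nonneg (Complex.I + lam0), norm_nonneg (Complex.I - lam0)]

theorem normIlt_of_im_pos {lam0 : ℂ} (h : 0 < lam0.im) :
    ‖Complex.I - lam0‖ < ‖Complex.I + lam0‖ := by
  have h1 := normsq_I_add lam0
  have h2 := normsq_I_sub lam0
  nlinarith [norm_nonneg (Complex.I + lam0), norm_nonneg (Complex.I - lam0)]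

set_option maxHeartbeats 2000000 in
/-- The nonreal case: von Neumann extension via the Cayley transform. -/
theorem nonreal_case (hdense : Dense (T.domain : Set H))
    (hclosed : IsClosed (T.graph : Set (H × H)))
    (hsymm : ∀ x y : T.domain, ⟪T x, (y : H)⟫ = ⟪(x : H), T y⟫)
    (hdefEq : Nonempty ((defect T Complex.I) ≃ₗᵢ[ℂ] (defect T (-Complex.I))))
    (lam0 : ℂ) (him : lam0.im ≠ 0) :
    ∃ D : Submodule ℂ H, T.domain ≤ D ∧ D ≤ T.adjoint.domain ∧
      (T.adjoint.domRestrict D).adjoint = T.adjoint.domRestrict D ∧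
      ∀ y : H, ∃! x : T.adjoint.domain,
        (x : H) ∈ D ∧ T.adjoint x - lam0 • (x : H) = y := by
  -- ⟪T x, x⟫ is real
  have hreal : ∀ x : T.domain, (⟪T x, (x : H)⟫).im = 0 := by
    intro x
    have h1 : (starRingEnd ℂ) ⟪T x, (x : H)⟫ = ⟪T x, (x : H)⟫ := by
      rw [inner_conj_symm]
      exact (hsymm x x).symm
    exact Complex.conj_eq_iff_im.mp h1
  -- norms of (T ± i) x
  have hnormsq : ∀ (s : ℂ), s = Complex.I ∨ s = -Complex.I →
      ∀ x : T.domain, ‖T x - s • (x : H)‖ ^ 2 = ‖T x‖ ^ 2 + ‖(x : H)‖ ^ 2 := by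
    intro s hs x
    have hre : RCLike.re ⟪T x, s • (x : H)⟫ = 0 := by
      rw [inner_smul_right]
      rcases hs with h | h <;> rw [h] <;>
        simp [Complex.mul_re, hreal x, Complex.I_re, Complex.I_im, Complex.neg_re,
          Complex.neg_im]
    have hns : ‖s • (x : H)‖ = ‖(x : H)‖ := by
      rcases hs with h | h <;> rw [h] <;>
        simp [norm_smul]
    rw [@norm_sub_sq ℂ, hre, hns]
    ring
  have hb1 : ∀ (s : ℂ), s = Complex.I ∨ s = -Complex.I →
      ∀ x : T.domain, 1 * ‖(x : H)‖ ≤ ‖T x - s • (x : H)‖ := by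
    intro s hs x
    rw [one_mul]
    have h1 := hnormsq s hs x
    nlinarith [norm_nonneg (T x - s • (x : H)), norm_nonneg (T x), norm_nonneg ((x : H))]
  have heqn : ∀ x : T.domain,
      ‖T x - (-Complex.I) • (x : H)‖ = ‖T x - Complex.I • (x : H)‖ := by
    intro x
    have h1 := hnormsq Complex.I (Or.inl rfl) x
    have h2 := hnormsq (-Complex.I) (Or.inr rfl) x
    nlinarith [norm_nonneg (T x - Complex.I • (x : H)),
      norm_nonneg (T x - (-Complex.I) • (x : H))]
  set Fp : T.domain →ₗ[ℂ] H := T.toFun - (-Complex.I) • T.domain.subtype with hFpdef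
  set Fm : T.domain →ₗ[ℂ] H := T.toFun - Complex.I • T.domain.subtype with hFmdef
  have hFpapp : ∀ x : T.domain, Fp x = T x - (-Complex.I) • (x : H) := fun _ => rfl
  have hFmapp : ∀ x : T.domain, Fm x = T x - Complex.I • (x : H) := fun _ => rfl
  have hFpbound : ∀ x : T.domain, 1 * ‖(x : H)‖ ≤ ‖Fp x‖ := fun x =>
    hb1 (-Complex.I) (Or.inr rfl) x
  have hFmbound : ∀ x : T.domain, 1 * ‖(x : H)‖ ≤ ‖Fm x‖ := fun x =>
    hb1 Complex.I (Or.inl rfl) x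
  have hinj : ∀ (G : T.domain →ₗ[ℂ] H), (∀ x : T.domain, 1 * ‖(x : H)‖ ≤ ‖G x‖) →
      Function.Injective G := by
    intro G hG a b hab
    have h0 : G (a - b) = 0 := by rw [map_sub, hab, sub_self]
    have h2 := hG (a - b)
    rw [h0, norm_zero, one_mul] at h2
    have h5 : ((a - b : T.domain) : H) = 0 := norm_le_zero_iff.mp h2
    have h6 : a - b = 0 := Subtype.ext (by simpa using h5)
    rwa [sub_eq_zero] at h6
  have hFpinj : Function.Injective Fp := hinj Fp hFpbound
  have hFminj : Function.Injective Fm := hinj Fm hFmbound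
  set Rp : Submodule ℂ H := LinearMap.range Fp with hRpdef
  set Rm : Submodule ℂ H := LinearMap.range Fm with hRmdef
  have hRpclosed : IsClosed (Rp : Set H) :=
    range_closed T hclosed (-Complex.I) 1 one_pos (hb1 (-Complex.I) (Or.inr rfl))
  have hRmclosed : IsClosed (Rm : Set H) :=
    range_closed T hclosed Complex.I 1 one_pos (hb1 Complex.I (Or.inl rfl))
  haveI : CompleteSpace Rp := hRpclosed.completeSpace_coe
  haveI : CompleteSpace Rm := hRmclosed.completeSpace_coe
  have e1 : defect T Complex.I = Rpᗮ := by
    rw [defect_eq T hdense, Complex.conj_I]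
  have e2 : defect T (-Complex.I) = Rmᗮ := by
    rw [defect_eq T hdense, map_neg, Complex.conj_I, neg_neg]
  set eqvp : T.domain ≃ₗ[ℂ] Rp := LinearEquiv.ofInjective Fp hFpinj with heqvp
  set eqvm : T.domain ≃ₗ[ℂ] Rm := LinearEquiv.ofInjective Fm hFminj with heqvm
  have hcoep : ∀ y : Rp, Fp (eqvp.symm y) = (y : H) := by
    intro y
    conv_rhs => rw [← eqvp.apply_symm_apply y]
    exact (LinearEquiv.ofInjective_apply Fp (eqvp.symm y)).symm
  have hcoep' : ∀ x : T.domain, ((eqvp x : Rp) : H) = Fp x := fun x =>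
    LinearEquiv.ofInjective_apply Fp x
  have hcoem' : ∀ x : T.domain, ((eqvm x : Rm) : H) = Fm x := fun x =>
    LinearEquiv.ofInjective_apply Fm x
  set EE : Rp ≃ₗ[ℂ] Rm := eqvp.symm.trans eqvm with hEEdef
  have hEEcoe : ∀ y : Rp, ((EE y : Rm) : H) = Fm (eqvp.symm y) := fun y =>
    hcoem' (eqvp.symm y)
  have hEEnorm : ∀ y : Rp, ‖EE y‖ = ‖y‖ := by
    intro y
    have h1 : ‖(EE y : H)‖ = ‖Fm (eqvp.symm y)‖ := by rw [hEEcoe]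
    have h2 : ‖(y : H)‖ = ‖Fp (eqvp.symm y)‖ := by rw [hcoep]
    have h3 : ‖Fm (eqvp.symm y)‖ = ‖Fp (eqvp.symm y)‖ := by
      rw [hFmapp, hFpapp, heqn]
    calc ‖EE y‖ = ‖(EE y : H)‖ := rfl
      _ = ‖(y : H)‖ := by rw [h1, h3, ← h2]
      _ = ‖y‖ := rfl
  set U0 : Rp ≃ₗᵢ[ℂ] Rm :=
    EE.isometryOfInner ((LinearMap.norm_map_iff_inner_map_map EE).mp hEEnorm) with hU0def
  have hU0app : ∀ y : Rp, U0 y = EE y := fun _ => rfl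
  set J : Rpᗮ ≃ₗᵢ[ℂ] Rmᗮ :=
    ((LinearIsometryEquiv.ofEq _ _ e1.symm).trans hdefEq.some).trans
      (LinearIsometryEquiv.ofEq _ _ e2) with hJdef
  set Pp : H →L[ℂ] Rp := Submodule.orthogonalProjectionOnto Rp with hPpdef
  set Qp : H →L[ℂ] (Rpᗮ : Submodule ℂ H) := Submodule.orthogonalProjectionOnto Rpᗮ with hQpdef
  set Pm : H →L[ℂ] Rm := Submodule.orthogonalProjectionOnto Rm with hPmdef
  set Qm : H →L[ℂ] (Rmᗮ : Submodule ℂ H) := Submodule.orthogonalProjectionOnto Rmᗮ with hQmdef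
  have hsump : ∀ x : H, ((Pp x : H)) + ((Qp x : H)) = x := fun x =>
    Rp.starProjection_add_starProjection_orthogonal x
  have hsumm : ∀ x : H, ((Pm x : H)) + ((Qm x : H)) = x := fun x =>
    Rm.starProjection_add_starProjection_orthogonal x
  have hPp_self : ∀ u : Rp, Pp (u : H) = u := fun u =>
    Submodule.orthogonalProjectionOnto_mem_subspace_eq_self u
  have hQp_self : ∀ k : (Rpᗮ : Submodule ℂ H), Qp (k : H) = k := fun k =>
    Submodule.orthogonalProjectionOnto_mem_subspace_eq_self k
  have hPp_perp : ∀ k : (Rpᗮ : Submodule ℂ H), Pp (k : H) = 0 := fun k =>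
    Submodule.orthogonalProjectionOnto_apply_of_mem_orthogonal k.2
  have hQp_onR : ∀ u : Rp, Qp (u : H) = 0 := fun u =>
    Submodule.orthogonalProjectionOnto_apply_of_mem_orthogonal
      (Rp.le_orthogonal_orthogonal u.2)
  have hPm_self : ∀ u : Rm, Pm (u : H) = u := fun u =>
    Submodule.orthogonalProjectionOnto_mem_subspace_eq_self u
  have hQm_self : ∀ k : (Rmᗮ : Submodule ℂ H), Qm (k : H) = k := fun k =>
    Submodule.orthogonalProjectionOnto_mem_subspace_eq_self k
  have hPm_perp : ∀ k : (Rmᗮ : Submodule ℂ H), Pm (k : H) = 0 := fun k =>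
    Submodule.orthogonalProjectionOnto_apply_of_mem_orthogonal k.2
  have hQm_onR : ∀ u : Rm, Qm (u : H) = 0 := fun u =>
    Submodule.orthogonalProjectionOnto_apply_of_mem_orthogonal
      (Rm.le_orthogonal_orthogonal u.2)
  set Ulin : H →ₗ[ℂ] H :=
    Rm.subtype.comp (U0.toLinearEquiv.toLinearMap.comp (Pp : H →ₗ[ℂ] Rp))
      + (Rmᗮ).subtype.comp (J.toLinearEquiv.toLinearMap.comp
          (Qp : H →ₗ[ℂ] (Rpᗮ : Submodule ℂ H))) with hUlindef
  have hUlin : ∀ z : H, Ulin z = ((U0 (Pp z) : Rm) : H) + ((J (Qp z) : H)) :=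
    fun _ => rfl
  set Vlin : H →ₗ[ℂ] H :=
    Rp.subtype.comp (U0.symm.toLinearEquiv.toLinearMap.comp (Pm : H →ₗ[ℂ] Rm))
      + (Rpᗮ).subtype.comp (J.symm.toLinearEquiv.toLinearMap.comp
          (Qm : H →ₗ[ℂ] (Rmᗮ : Submodule ℂ H))) with hVlindef
  have hVlin : ∀ z : H, Vlin z = ((U0.symm (Pm z) : H)) + ((J.symm (Qm z) : H)) :=
    fun _ => rfl
  have hVU : ∀ z : H, Vlin (Ulin z) = z := by
    intro z
    have h1 : Pm (Ulin z) = U0 (Pp z) := by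
      rw [hUlin, map_add, hPm_self, hPm_perp, add_zero]
    have h2 : Qm (Ulin z) = J (Qp z) := by
      rw [hUlin, map_add, hQm_onR, hQm_self, zero_add]
    rw [hVlin, h1, h2, U0.symm_apply_apply, J.symm_apply_apply, hsump]
  have hUV : ∀ z : H, Ulin (Vlin z) = z := by
    intro z
    have h1 : Pp (Vlin z) = U0.symm (Pm z) := by
      rw [hVlin, map_add, hPp_self, hPp_perp, add_zero]
    have h2 : Qp (Vlin z) = J.symm (Qm z) := by
      rw [hVlin, map_add, hQp_onR, hQp_self, zero_add]
    rw [hUlin, h1, h2, U0.apply_symm_apply, J.apply_symm_apply, hsumm]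
  set Ueq : H ≃ₗ[ℂ] H :=
    LinearEquiv.ofLinear Ulin Vlin (LinearMap.ext hUV) (LinearMap.ext hVU) with hUeqdef
  have hUinner : ∀ z w : H, ⟪Ueq z, Ueq w⟫ = ⟪z, w⟫ := by
    intro z w
    have hz : Ueq z = ((U0 (Pp z) : H)) + ((J (Qp z) : H)) := hUlin z
    have hw : Ueq w = ((U0 (Pp w) : H)) + ((J (Qp w) : H)) := hUlin w
    have c1 : ⟪((U0 (Pp z)) : H), ((J (Qp w)) : H)⟫ = 0 :=
      Submodule.inner_right_of_mem_orthogonal (U0 (Pp z)).2 (J (Qp w)).2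
    have c2 : ⟪((J (Qp z)) : H), ((U0 (Pp w)) : H)⟫ = 0 :=
      Submodule.inner_left_of_mem_orthogonal (U0 (Pp w)).2 (J (Qp z)).2
    have d1 : ⟪((U0 (Pp z)) : H), ((U0 (Pp w)) : H)⟫ = ⟪((Pp z : H)), ((Pp w : H))⟫ := by
      rw [← Submodule.coe_inner, U0.inner_map_map, Submodule.coe_inner]
    have d2 : ⟪((J (Qp z)) : H), ((J (Qp w)) : H)⟫ = ⟪((Qp z : H)), ((Qp w : H))⟫ := by
      rw [← Submodule.coe_inner, J.inner_map_map, Submodule.coe_inner]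
    have c3 : ⟪((Pp z : H)), ((Qp w : H))⟫ = 0 :=
      Submodule.inner_right_of_mem_orthogonal (Pp z).2 (Qp w).2
    have c4 : ⟪((Qp z : H)), ((Pp w : H))⟫ = 0 :=
      Submodule.inner_left_of_mem_orthogonal (Pp w).2 (Qp z).2
    conv_rhs => rw [← hsump z, ← hsump w]
    rw [hz, hw, inner_add_left, inner_add_right, inner_add_right,
      inner_add_left, inner_add_right, inner_add_right,
      c1, c2, d1, d2, c3, c4]
  set U : H ≃ₗᵢ[ℂ] H := Ueq.isometryOfInner hUinner with hUdef
  have hUapp : ∀ z : H, U z = Ulin z := fun _ => rfl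
  have hUF : ∀ x : T.domain, U (Fp x) = Fm x := by
    intro x
    have h0 : Fp x = ((eqvp x : Rp) : H) := (hcoep' x).symm
    rw [hUapp, hUlin, h0, hPp_self, hQp_onR, map_zero]
    rw [hU0app, hEEcoe, eqvp.symm_apply_apply]
    simp
  set Ucl : H →L[ℂ] H := U.toLinearIsometry.toContinuousLinearMap with hUcldef
  set Vcl : H →L[ℂ] H := U.symm.toLinearIsometry.toContinuousLinearMap with hVcldef
  have hUclapp : ∀ z : H, Ucl z = U z := fun _ => rfl
  have hVclapp : ∀ z : H, Vcl z = U.symm z := fun _ => rfl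
  have hUnorm : ‖Ucl‖ ≤ 1 :=
    ContinuousLinearMap.opNorm_le_bound _ zero_le_one fun x => by
      rw [hUclapp, U.norm_map, one_mul]
  have hVnorm : ‖Vcl‖ ≤ 1 :=
    ContinuousLinearMap.opNorm_le_bound _ zero_le_one fun x => by
      rw [hVclapp, U.symm.norm_map, one_mul]
  set Ccl : H →L[ℂ] H := ContinuousLinearMap.id ℂ H - Ucl with hCcldef
  set Ecl : H →L[ℂ] H :=
    Complex.I • (ContinuousLinearMap.id ℂ H + Ucl) with hEcldef
  have hCapp : ∀ z : H, Ccl z = z - U z := by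
    intro z
    rw [hCcldef]
    simp only [ContinuousLinearMap.sub_apply, ContinuousLinearMap.id_apply, hUclapp]
  have hEapp : ∀ z : H, Ecl z = Complex.I • (z + U z) := by
    intro z
    rw [hEcldef]
    simp only [ContinuousLinearMap.smul_apply, ContinuousLinearMap.add_apply,
      ContinuousLinearMap.id_apply, hUclapp]
  have h2I : (2 * Complex.I : ℂ) ≠ 0 := by
    simp [Complex.I_ne_zero]
  have hFpFm : ∀ x : T.domain, Fp x - Fm x = (2 * Complex.I) • (x : H) := by
    intro x
    rw [hFpapp, hFmapp]
    module
  have hFpFm' : ∀ x : T.domain, Fp x + Fm x = (2 : ℂ) • (T x) := by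
    intro x
    rw [hFpapp, hFmapp]
    module
  have hfix : ∀ z : H, U z = z → z = 0 := by
    intro z hz
    have h1 : ∀ x : T.domain, ⟪z, (x : H)⟫ = 0 := by
      intro x
      have ha : ⟪z, Fp x⟫ = ⟪z, Fm x⟫ := by
        have hb' := (U.inner_map_map z (Fp x)).symm
        rw [hz, hUF] at hb'
        exact hb'
      have hb' : ⟪z, Fp x - Fm x⟫ = 0 := by rw [inner_sub_right, ha, sub_self]
      rw [hFpFm, inner_smul_right] at hb'
      exact (mul_eq_zero.mp hb').resolve_left h2I
    exact hdense.eq_of_inner_left ℂ fun v hv => by rw [inner_zero_left]; exact h1 ⟨v, hv⟩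
  have hCinj : Function.Injective Ccl := by
    intro a b hab
    have h0 : Ccl (a - b) = 0 := by rw [map_sub, hab, sub_self]
    rw [hCapp, sub_eq_zero] at h0
    have := hfix (a - b) h0.symm
    rwa [sub_eq_zero] at this
  have hscal : ((2 * Complex.I)⁻¹ * Complex.I * 2 : ℂ) = 1 := by
    rw [mul_assoc, show (Complex.I * 2 : ℂ) = 2 * Complex.I from by ring,
      inv_mul_cancel₀ h2I]
  clear hJdef hU0def hUdef hUeqdef hUlindef hVlindef hCcldef hEcldef hUcldef hVcldef
    hPpdef hQpdef hPmdef hQmdef hEEdef heqvp heqvm hFpdef hFmdef hRpdef hRmdef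
  clear_value Ecl Ccl Vcl Ucl U Ueq Vlin Ulin J U0 EE eqvm eqvp Qm Pm Qp Pp Rm Rp Fm Fp
  apply key T hdense lam0 Ccl Ecl hCinj
  · intro x
    refine ⟨(2 * Complex.I)⁻¹ • (Fp x), ?_, ?_⟩
    · rw [map_smul, hCapp, hUF, hFpFm, smul_smul, inv_mul_cancel₀ h2I, one_smul]
    · rw [map_smul, hEapp, hUF, hFpFm', smul_smul, smul_smul, hscal, one_smul]
  · intro z w
    rw [hEapp, hCapp, hCapp, hEapp]
    rw [inner_smul_left, inner_smul_right]
    simp only [inner_add_left, inner_add_right, inner_sub_left, inner_sub_right,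
      U.inner_map_map]
    rw [Complex.conj_I]
    ring
  · intro v vs h
    have h1 : ∀ z : H, ⟪vs + Complex.I • v, z⟫ = ⟪vs - Complex.I • v, U z⟫ := by
      intro z
      have h3 := h z
      rw [hCapp, hEapp, inner_sub_right, inner_smul_right, inner_add_right] at h3
      rw [inner_add_left, inner_sub_left, inner_smul_left, inner_smul_left, Complex.conj_I]
      linear_combination h3
    have h2 : vs + Complex.I • v = U.symm (vs - Complex.I • v) := by
      apply ext_inner_right ℂ
      intro z
      rw [h1 z]
      have h4 : ⟪U.symm (vs - Complex.I • v), z⟫ = ⟪vs - Complex.I • v, U z⟫ := by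
        conv_rhs => rw [← U.apply_symm_apply (vs - Complex.I • v)]
        rw [U.inner_map_map]
      rw [h4]
    have h5 : U (vs + Complex.I • v) = vs - Complex.I • v := by
      rw [h2, U.apply_symm_apply]
    refine ⟨(2 * Complex.I)⁻¹ • (vs + Complex.I • v), ?_, ?_⟩
    · rw [map_smul, hCapp, h5]
      have hcomb : (vs + Complex.I • v) - (vs - Complex.I • v) = (2 * Complex.I) • v := by
        module
      rw [hcomb, smul_smul, inv_mul_cancel₀ h2I, one_smul]
    · rw [map_smul, hEapp, h5]
      have hcomb : (vs + Complex.I • v) + (vs - Complex.I • v) = (2 : ℂ) • vs := by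
        module
      rw [hcomb, smul_smul, smul_smul, hscal, one_smul]
  · set a : ℂ := Complex.I + lam0 with hadef
    set b : ℂ := Complex.I - lam0 with hbdef
    have hGfun : (fun z : H => Ecl z - lam0 • Ccl z)
        = fun z : H => b • z + a • (U z) := by
      funext z
      rw [hEapp, hCapp, hadef, hbdef]
      module
    rw [hGfun]
    rcases lt_or_gt_of_ne him with hneg | hpos
    · -- lam0.im < 0 : use 1 + (a/b) • Ucl
      have hb0 : b ≠ 0 := Ine_of_im_neg hneg
      have hab : ‖a‖ < ‖b‖ := normIlt_of_im_neg hneg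
      set k : ℂ := a / b with hkdef
      have hk : ‖k‖ < 1 := by
        rw [hkdef, norm_div, div_lt_one (norm_pos_iff.mpr hb0)]
        exact hab
      have hba : b * k = a := by
        rw [hkdef]
        field_simp
      have hre2 : (fun z : H => b • z + a • (U z))
          = fun z : H => b • ((ContinuousLinearMap.id ℂ H + k • Ucl) z) := by
        funext z
        simp only [ContinuousLinearMap.add_apply, ContinuousLinearMap.id_apply,
          ContinuousLinearMap.smul_apply, hUclapp]
        rw [smul_add, smul_smul, hba]
      rw [hre2]
      have hknorm : ‖(-(k • Ucl) : H →L[ℂ] H)‖ < 1 := by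
        rw [norm_neg, norm_smul]
        nlinarith [norm_nonneg Ucl, norm_nonneg k, hk, hUnorm]
      set u : (H →L[ℂ] H)ˣ := Units.oneSub (-(k • Ucl)) hknorm with hudef
      have huval : (u : H →L[ℂ] H) = ContinuousLinearMap.id ℂ H + k • Ucl := by
        rw [hudef]
        show (1 : H →L[ℂ] H) - -(k • Ucl) = _
        rw [sub_neg_eq_add, ContinuousLinearMap.one_def]
      have hubij := unit_bijective u
      rw [huval] at hubij
      exact (smul_bijective hb0).comp hubij
    · -- lam0.im > 0 : use a • U ((1 + (b/a) • Vcl) z)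
      have ha0 : a ≠ 0 := Ine_of_im_pos hpos
      have hab : ‖b‖ < ‖a‖ := normIlt_of_im_pos hpos
      set k : ℂ := b / a with hkdef
      have hk : ‖k‖ < 1 := by
        rw [hkdef, norm_div, div_lt_one (norm_pos_iff.mpr ha0)]
        exact hab
      have hba : a * k = b := by
        rw [hkdef]
        field_simp
      have hre2 : (fun z : H => b • z + a • (U z))
          = fun z : H => a • (U ((ContinuousLinearMap.id ℂ H + k • Vcl) z)) := by
        funext z
        simp only [ContinuousLinearMap.add_apply, ContinuousLinearMap.id_apply,
          ContinuousLinearMap.smul_apply, hVclapp]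
        rw [map_add, map_smul, U.apply_symm_apply, smul_add, smul_smul, hba, add_comm]
      rw [hre2]
      have hknorm : ‖(-(k • Vcl) : H →L[ℂ] H)‖ < 1 := by
        rw [norm_neg, norm_smul]
        nlinarith [norm_nonneg Vcl, norm_nonneg k, hk, hVnorm]
      set u : (H →L[ℂ] H)ˣ := Units.oneSub (-(k • Vcl)) hknorm with hudef
      have huval : (u : H →L[ℂ] H) = ContinuousLinearMap.id ℂ H + k • Vcl := by
        rw [hudef]
        show (1 : H →L[ℂ] H) - -(k • Vcl) = _
        rw [sub_neg_eq_add, ContinuousLinearMap.one_def]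
      have hubij := unit_bijective u
      rw [huval] at hubij
      have hUbij : Function.Bijective (⇑U : H → H) := U.bijective
      exact (smul_bijective ha0).comp (hUbij.comp hubij)

set_option maxHeartbeats 1000000 in
/-- The easy direction: a self-adjoint extension with `lam0` in its resolvent set gives a
lower bound, via the closed graph theorem. -/
theorem backward (hdense : Dense (T.domain : Set H))
    (hsymm : ∀ x y : T.domain, ⟪T x, (y : H)⟫ = ⟪(x : H), T y⟫)
    (lam0 : ℂ) (D : Submodule ℂ H) (hTD : T.domain ≤ D) (hDA : D ≤ T.adjoint.domain)
    (hsa : (T.adjoint.domRestrict D).adjoint = T.adjoint.domRestrict D)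
    (hbij : ∀ y : H, ∃! x : T.adjoint.domain,
        (x : H) ∈ D ∧ T.adjoint x - lam0 • (x : H) = y) :
    ∃ c : ℝ, 0 < c ∧ ∀ x : T.domain, c * ‖(x : H)‖ ≤ ‖T x - lam0 • (x : H)‖ := by
  classical
  have hTleA : T ≤ T.adjoint :=
    (show T.IsFormalAdjoint T from hsymm).le_adjoint hdense
  set B : H →ₗ.[ℂ] H := T.adjoint.domRestrict D with hBdef
  have hBdomD : B.domain = D := by
    rw [hBdef, LinearPMap.domRestrict_domain]
    exact inf_eq_left.mpr hDA
  have hBdense : Dense (B.domain : Set H) := by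
    rw [hBdomD]
    exact hdense.mono (by exact_mod_cast hTD)
  have hBclosed : IsClosed (B.graph : Set (H × H)) := by
    rw [← hsa]
    exact adjoint_graph_closed B hBdense
  have hex : ∀ y : H, ∃ x : T.adjoint.domain,
      (x : H) ∈ D ∧ T.adjoint x - lam0 • (x : H) = y := fun y => (hbij y).exists
  choose sol hsolD hsolval using hex
  set R : H → H := fun y => ((sol y : H)) with hRdef
  have hRuniq : ∀ (y : H) (x : T.adjoint.domain), (x : H) ∈ D →
      T.adjoint x - lam0 • (x : H) = y → R y = (x : H) := by
    intro y x h1 h2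
    rw [hRdef]
    exact congrArg _ ((hbij y).unique ⟨hsolD y, hsolval y⟩ ⟨h1, h2⟩)
  have hadd : ∀ y₁ y₂ : H, R (y₁ + y₂) = R y₁ + R y₂ := by
    intro y₁ y₂
    have h1 : ((sol y₁ + sol y₂ : T.adjoint.domain) : H) ∈ D :=
      D.add_mem (hsolD y₁) (hsolD y₂)
    have h2 : T.adjoint (sol y₁ + sol y₂)
        - lam0 • ((sol y₁ + sol y₂ : T.adjoint.domain) : H) = y₁ + y₂ := by
      have e1 := hsolval y₁
      have e2 := hsolval y₂
      rw [LinearPMap.map_add, Submodule.coe_add]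
      conv_rhs => rw [← e1, ← e2]
      module
    have h3 := hRuniq (y₁ + y₂) _ h1 h2
    rw [h3, Submodule.coe_add]
  have hsmul : ∀ (a : ℂ) (y : H), R (a • y) = a • R y := by
    intro a y
    have h1 : ((a • sol y : T.adjoint.domain) : H) ∈ D := D.smul_mem a (hsolD y)
    have h2 : T.adjoint (a • sol y) - lam0 • ((a • sol y : T.adjoint.domain) : H)
        = a • y := by
      have e1 := hsolval y
      rw [LinearPMap.map_smul, Submodule.coe_smul]
      conv_rhs => rw [← e1]
      module
    have h3 := hRuniq (a • y) _ h1 h2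
    rw [h3, Submodule.coe_smul]
  set Rlin : H →ₗ[ℂ] H :=
    { toFun := R
      map_add' := hadd
      map_smul' := hsmul } with hRlindef
  have hRlinapp : ∀ y : H, Rlin y = R y := fun _ => rfl
  have hgraph : IsClosed ((Rlin.graph : Submodule ℂ (H × H)) : Set (H × H)) := by
    have hset : ((Rlin.graph : Submodule ℂ (H × H)) : Set (H × H)) =
        (fun p : H × H => (p.2, p.1 + lam0 • p.2)) ⁻¹' (B.graph : Set (H × H)) := by
      ext p
      simp only [Set.mem_preimage, SetLike.mem_coe, LinearMap.mem_graph_iff]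
      constructor
      · intro hp
        rw [LinearPMap.mem_graph_iff]
        have hc : ((sol p.1 : T.adjoint.domain) : H) = p.2 := hp.symm
        have hmemD : p.2 ∈ D := hc ▸ hsolD p.1
        have hmem : p.2 ∈ B.domain := by rw [hBdomD]; exact hmemD
        refine ⟨⟨p.2, hmem⟩, rfl, ?_⟩
        have hxA : p.2 ∈ T.adjoint.domain := hDA hmemD
        have hBval : B ⟨p.2, hmem⟩ = T.adjoint ⟨p.2, hxA⟩ :=
          LinearPMap.domRestrict_apply rfl
        have hsoleq : (⟨p.2, hxA⟩ : T.adjoint.domain) = sol p.1 :=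
          Subtype.ext hc.symm
        calc B ⟨p.2, hmem⟩ = T.adjoint ⟨p.2, hxA⟩ := hBval
          _ = T.adjoint (sol p.1) := by rw [hsoleq]
          _ = p.1 + lam0 • ((sol p.1 : T.adjoint.domain) : H) :=
              sub_eq_iff_eq_add.mp (hsolval p.1)
          _ = p.1 + lam0 • p.2 := by rw [hc]
      · intro hp
        rw [LinearPMap.mem_graph_iff] at hp
        obtain ⟨x, hx1, hx2⟩ := hp
        have hxD : (x : H) ∈ D := hBdomD ▸ x.2
        have hxA : (x : H) ∈ T.adjoint.domain := hDA hxD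
        have hBval : B x = T.adjoint ⟨(x : H), hxA⟩ :=
          LinearPMap.domRestrict_apply rfl
        have hval : T.adjoint ⟨(x : H), hxA⟩ - lam0 • ((x : H)) = p.1 := by
          rw [← hBval, hx2, hx1]
          module
        have h6 := hRuniq p.1 ⟨(x : H), hxA⟩ hxD hval
        rw [hRlinapp, h6]
        exact hx1.symm
    rw [hset]
    apply hBclosed.preimage
    exact Continuous.prodMk continuous_snd
      (continuous_fst.add (continuous_snd.const_smul lam0))
  have hcont : Continuous Rlin := Rlin.continuous_of_isClosed_graph hgraph
  set Rc : H →L[ℂ] H := ⟨Rlin, hcont⟩ with hRcdef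
  refine ⟨(‖Rc‖ + 1)⁻¹, by positivity, ?_⟩
  intro x
  have hxA : (x : H) ∈ T.adjoint.domain := hTleA.1 x.2
  have hAx : T x = T.adjoint ⟨(x : H), hxA⟩ := hTleA.2 rfl
  have hR : R (T x - lam0 • (x : H)) = (x : H) :=
    hRuniq _ ⟨(x : H), hxA⟩ (hTD x.2) (by rw [← hAx])
  have hble := Rc.le_opNorm (T x - lam0 • (x : H))
  have hRc : Rc (T x - lam0 • (x : H)) = (x : H) := hR
  have hnRc : (0 : ℝ) ≤ ‖Rc‖ := norm_nonneg _
  calc (‖Rc‖ + 1)⁻¹ * ‖(x : H)‖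
      = (‖Rc‖ + 1)⁻¹ * ‖Rc (T x - lam0 • (x : H))‖ := by rw [hRc]
    _ ≤ (‖Rc‖ + 1)⁻¹ * (‖Rc‖ * ‖T x - lam0 • (x : H)‖) := by
        apply mul_le_mul_of_nonneg_left hble (by positivity)
    _ ≤ ‖T x - lam0 • (x : H)‖ := by
        rw [← mul_assoc]
        have h7 : (‖Rc‖ + 1)⁻¹ * ‖Rc‖ ≤ 1 := by
          rw [inv_mul_le_iff₀ (by positivity)]
          linarith
        nlinarith [norm_nonneg (T x - lam0 • (x : H))]

end Statement14Aux

/-- Let `T` be a densely defined closed *simple* symmetric operator whose deficiency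
subspaces `ker(T* − i)` and `ker(T* + i)` have the same (nonzero) Hilbert dimension, i.e.
they are isometrically isomorphic and nonzero.  Then `λ₀ ∈ ℂ` is a point of regular type
for `T` iff some self-adjoint extension `T̃ = T*|_D` of `T` has `λ₀` in its resolvent set
(`x ↦ T̃x − λ₀x` is a bijection from `D(T̃)` onto `H`); equivalently, the spectral kernel
of `T` is the intersection of the spectra of all self-adjoint extensions of `T`. -/
theorem statement14 (T : H →ₗ.[ℂ] H)
    (hdense : Dense (T.domain : Set H))
    (hclosed : IsClosed (T.graph : Set (H × H)))
    (hsymm : ∀ x y : T.domain, (inner ℂ (T x) ((y : H)) : ℂ) = inner ℂ ((x : H)) (T y))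
    (hsimple : Dense ((⨆ lam ∈ {z : ℂ | z.im ≠ 0}, defect T lam : Submodule ℂ H) : Set H))
    (hdefEq : Nonempty ((defect T Complex.I) ≃ₗᵢ[ℂ] (defect T (-Complex.I))))
    (hdefNe : defect T Complex.I ≠ ⊥)
    (lam0 : ℂ) :
    (∃ c : ℝ, 0 < c ∧ ∀ x : T.domain, c * ‖(x : H)‖ ≤ ‖T x - lam0 • (x : H)‖) ↔
      ∃ D : Submodule ℂ H, T.domain ≤ D ∧ D ≤ T.adjoint.domain ∧
        (T.adjoint.domRestrict D).adjoint = T.adjoint.domRestrict D ∧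
        ∀ y : H, ∃! x : T.adjoint.domain,
          (x : H) ∈ D ∧ T.adjoint x - lam0 • (x : H) = y := by
  constructor
  · rintro ⟨c, hc, hb⟩
    by_cases him : lam0.im = 0
    · exact Statement14Aux.real_case T hdense hclosed hsymm lam0 him c hc hb
    · exact Statement14Aux.nonreal_case T hdense hclosed hsymm hdefEq lam0 him
  · rintro ⟨D, hTD, hDA, hsa, hbij⟩
    exact Statement14Aux.backward T hdense hsymm lam0 D hTD hDA hsa hbij

end
end

section
/- Let θ : ℝ → ℤ be a function with locally finite support and let n ≥ 1 be a natural number. Then θ is n-interlacing if and only if there exist functions θ₁, …, θₙ : ℝ → ℤ, each with locally finite support and each 1-interlacing, such that θ = θ₁ + ⋯ + θₙ. -/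
/-- `θ : ℝ → ℤ` has locally finite support: every bounded subset of `ℝ` contains only
finitely many points of the support of `θ`. -/
def HasLocallyFiniteSupport (θ : ℝ → ℤ) : Prop :=
  ∀ K : Set ℝ, Bornology.IsBounded K → (K ∩ Function.support θ).Finite

/-- `θ` is `n`-interlacing: for all `a < b`, `|∑_{x ∈ (a,b)} θ(x)| ≤ n` (the sum running
over the finitely many points of the support of `θ` in `(a,b)`). -/
def IsInterlacing (n : ℕ) (θ : ℝ → ℤ) : Prop :=
  ∀ a b : ℝ, a < b → |∑ᶠ x ∈ Set.Ioo a b, θ x| ≤ (n : ℤ)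


open Set Function

def clampZ (k : ℤ) : ℤ := max 0 (min 1 k)

lemma clampZ_nonneg (k : ℤ) : 0 ≤ clampZ k := le_max_left _ _

lemma clampZ_le_one (k : ℤ) : clampZ k ≤ 1 := max_le (by norm_num) (min_le_left _ _)

lemma clampZ_of_nonpos {k : ℤ} (h : k ≤ 0) : clampZ k = 0 := by unfold clampZ; omega

lemma clampZ_of_pos {k : ℤ} (h : 1 ≤ k) : clampZ k = 1 := by unfold clampZ; omega

lemma clampZ_sum (n : ℕ) (k : ℤ) (h0 : 0 ≤ k) (hn : k ≤ n) :
    ∑ i ∈ Finset.range n, clampZ (k - i) = k := by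
  induction n with
  | zero => simp at hn ⊢; omega
  | succ n ih =>
    rw [Finset.sum_range_succ]
    by_cases hk : k ≤ n
    · rw [ih hk, clampZ_of_nonpos (by push_cast; omega)]; ring
    · have hk' : k = n + 1 := by push_cast at hn ⊢; omega
      have h1 : ∀ i ∈ Finset.range n, clampZ (k - i) = 1 := by
        intro i hi
        rw [Finset.mem_range] at hi
        have h2 : (i:ℤ) < n := by exact_mod_cast hi
        exact clampZ_of_pos (by omega)
      rw [Finset.sum_congr rfl h1, Finset.sum_const, Finset.card_range,
        clampZ_of_pos (by push_cast; omega), nsmul_eq_mul]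
      push_cast
      omega


lemma finsum_mem_zero_of_empty {f : ℝ → ℤ} {s : Set ℝ} (h : s ∩ support f = ∅) :
    ∑ᶠ t ∈ s, f t = 0 := by
  rw [← finsum_mem_inter_support, h, finsum_mem_empty]

lemma finsum_mem_eq_single {f : ℝ → ℤ} {s : Set ℝ} {x : ℝ}
    (hsub : s ∩ support f ⊆ {x}) (hx : x ∈ s) : ∑ᶠ t ∈ s, f t = f x := by
  by_cases hxs : x ∈ support f
  · have h : s ∩ support f = {x} := subset_antisymm hsub (by
      rintro y rfl; exact ⟨hx, hxs⟩)
    rw [← finsum_mem_inter_support, h, finsum_mem_singleton]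
  · have h : s ∩ support f = ∅ := by
      ext y; simp only [Set.mem_empty_iff_false, iff_false]
      intro hy
      have := hsub hy
      simp only [Set.mem_singleton_iff] at this
      exact hxs (this ▸ hy.2)
    rw [finsum_mem_zero_of_empty h]
    simp only [Function.mem_support, not_not] at hxs
    exact hxs.symm

lemma finsum_Ioc_split (f : ℝ → ℤ) {a b c : ℝ} (hab : a ≤ b) (hbc : b ≤ c)
    (h1 : (Set.Ioc a b ∩ support f).Finite) (h2 : (Set.Ioc b c ∩ support f).Finite) :
    ∑ᶠ t ∈ Set.Ioc a c, f t = (∑ᶠ t ∈ Set.Ioc a b, f t) + ∑ᶠ t ∈ Set.Ioc b c, f t := by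
  rw [← Set.Ioc_union_Ioc_eq_Ioc hab hbc]
  refine finsum_mem_union' ?_ h1 h2
  rw [Set.disjoint_left]
  rintro y ⟨_, hy2⟩ ⟨hy3, _⟩
  exact absurd hy3 (not_lt.2 hy2)

lemma finsum_Ioo_split (f : ℝ → ℤ) {a b : ℝ} (hab : a < b)
    (h : (Set.Ioo a b ∩ support f).Finite) :
    ∑ᶠ t ∈ Set.Ioc a b, f t = (∑ᶠ t ∈ Set.Ioo a b, f t) + f b := by
  rw [← Set.Ioo_union_right hab]
  rw [finsum_mem_union' ?_ h ((Set.finite_singleton b).inter_of_left _), finsum_mem_singleton]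
  rw [Set.disjoint_left]
  rintro y ⟨_, hy2⟩ hy3
  rw [Set.mem_singleton_iff] at hy3
  exact absurd hy3 (ne_of_lt hy2)

noncomputable def Gf (θ : ℝ → ℤ) (x : ℝ) : ℤ :=
  if 0 ≤ x then ∑ᶠ t ∈ Set.Ioc 0 x, θ t else -∑ᶠ t ∈ Set.Ioc x 0, θ t

lemma finite_Ioc {θ : ℝ → ℤ} (hθ : HasLocallyFiniteSupport θ) (a b : ℝ) :
    (Set.Ioc a b ∩ support θ).Finite := hθ _ (Metric.isBounded_Ioc a b)

lemma finite_Ioo {θ : ℝ → ℤ} (hθ : HasLocallyFiniteSupport θ) (a b : ℝ) :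
    (Set.Ioo a b ∩ support θ).Finite := hθ _ (Metric.isBounded_Ioo a b)

lemma Gdiff {θ : ℝ → ℤ} (hθ : HasLocallyFiniteSupport θ) {a b : ℝ} (hab : a ≤ b) :
    ∑ᶠ t ∈ Set.Ioc a b, θ t = Gf θ b - Gf θ a := by
  unfold Gf
  rcases le_or_gt 0 a with h0a | h0a
  · rw [if_pos h0a, if_pos (h0a.trans hab)]
    have := finsum_Ioc_split θ h0a hab (finite_Ioc hθ _ _) (finite_Ioc hθ _ _)
    omega
  · rcases le_or_gt 0 b with h0b | h0b
    · rw [if_pos h0b, if_neg (not_le.2 h0a)]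
      have := finsum_Ioc_split θ h0a.le h0b (finite_Ioc hθ _ _) (finite_Ioc hθ _ _)
      omega
    · rw [if_neg (not_le.2 h0a), if_neg (not_le.2 h0b)]
      have := finsum_Ioc_split θ hab h0b.le (finite_Ioc hθ _ _) (finite_Ioc hθ _ _)
      omega

lemma Gioo {θ : ℝ → ℤ} (hθ : HasLocallyFiniteSupport θ) {a b : ℝ} (hab : a < b) :
    ∑ᶠ t ∈ Set.Ioo a b, θ t = Gf θ b - Gf θ a - θ b := by
  have h1 := finsum_Ioo_split θ hab (finite_Ioo hθ a b)
  have h2 := Gdiff hθ hab.le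
  omega

lemma exists_gap_right {θ : ℝ → ℤ} (hθ : HasLocallyFiniteSupport θ) (x : ℝ) :
    ∃ d, x < d ∧ Set.Ioo x d ∩ support θ = ∅ := by
  have hfin := finite_Ioo hθ x (x + 1)
  by_cases hne : (Set.Ioo x (x + 1) ∩ support θ).Nonempty
  · have hne' : hfin.toFinset.Nonempty := by rwa [Set.Finite.toFinset_nonempty]
    set d := hfin.toFinset.min' hne' with hd
    have hdm : d ∈ Set.Ioo x (x + 1) ∩ support θ := by
      have := hfin.toFinset.min'_mem hne'
      rwa [Set.Finite.mem_toFinset] at this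
    obtain ⟨⟨hd1, hd2⟩, hd3⟩ := hdm
    refine ⟨d, hd1, ?_⟩
    ext y
    simp only [Set.mem_inter_iff, Set.mem_Ioo, Set.mem_empty_iff_false, iff_false]
    rintro ⟨⟨hy1, hy2⟩, hy3⟩
    have hyA : y ∈ hfin.toFinset := by
      rw [Set.Finite.mem_toFinset]
      exact ⟨⟨hy1, hy2.trans hd2⟩, hy3⟩
    exact absurd (hfin.toFinset.min'_le y hyA) (not_le.2 hy2)
  · exact ⟨x + 1, by linarith, Set.not_nonempty_iff_eq_empty.1 hne⟩

lemma exists_gap_left {θ : ℝ → ℤ} (hθ : HasLocallyFiniteSupport θ) (x : ℝ) :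
    ∃ c, c < x ∧ Set.Ioo c x ∩ support θ = ∅ := by
  have hfin := finite_Ioo hθ (x - 1) x
  by_cases hne : (Set.Ioo (x - 1) x ∩ support θ).Nonempty
  · have hne' : hfin.toFinset.Nonempty := by rwa [Set.Finite.toFinset_nonempty]
    set c := hfin.toFinset.max' hne' with hc
    have hcm : c ∈ Set.Ioo (x - 1) x ∩ support θ := by
      have := hfin.toFinset.max'_mem hne'
      rwa [Set.Finite.mem_toFinset] at this
    obtain ⟨⟨hc1, hc2⟩, hc3⟩ := hcm
    refine ⟨c, hc2, ?_⟩
    ext y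
    simp only [Set.mem_inter_iff, Set.mem_Ioo, Set.mem_empty_iff_false, iff_false]
    rintro ⟨⟨hy1, hy2⟩, hy3⟩
    have hyA : y ∈ hfin.toFinset := by
      rw [Set.Finite.mem_toFinset]
      exact ⟨⟨lt_trans hc1 hy1, hy2⟩, hy3⟩
    exact absurd (hfin.toFinset.le_max' y hyA) (not_le.2 hy1)
  · exact ⟨x - 1, by linarith, Set.not_nonempty_iff_eq_empty.1 hne⟩

lemma sum_eq_of_steps (θ f : ℝ → ℤ) (hθ : HasLocallyFiniteSupport θ)
    (hsupp : support f ⊆ support θ) (Φ : ℝ → ℤ)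
    (h1 : ∀ c x : ℝ, c ≤ x → Set.Ioc c x ∩ support θ = ∅ → Φ x = Φ c)
    (h2 : ∀ c x : ℝ, c < x → Set.Ioo c x ∩ support θ = ∅ → Φ x - f x = Φ c) :
    ∀ a b : ℝ, a ≤ b → ∑ᶠ t ∈ Set.Ioc a b, f t = Φ b - Φ a := by
  have hfinf : ∀ a b : ℝ, (Set.Ioc a b ∩ support f).Finite :=
    fun a b => (finite_Ioc hθ a b).subset (Set.inter_subset_inter_right _ hsupp)
  suffices key : ∀ k : ℕ, ∀ a b : ℝ, a ≤ b → (Set.Ioc a b ∩ support θ).ncard = k →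
      ∑ᶠ t ∈ Set.Ioc a b, f t = Φ b - Φ a by
    intro a b hab
    exact key _ a b hab rfl
  intro k
  induction k with
  | zero =>
    intro a b hab hcard
    have hemp : Set.Ioc a b ∩ support θ = ∅ :=
      (Set.ncard_eq_zero (finite_Ioc hθ a b)).1 hcard
    have hempf : Set.Ioc a b ∩ support f = ∅ :=
      Set.eq_empty_of_subset_empty (hemp ▸ Set.inter_subset_inter_right _ hsupp)
    rw [finsum_mem_zero_of_empty hempf, h1 a b hab hemp]
    ring
  | succ k ih =>
    intro a b hab hcard
    set S := Set.Ioc a b ∩ support θ with hS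
    have hfin : S.Finite := finite_Ioc hθ a b
    have hSne : S.Nonempty := by
      rw [← Set.ncard_pos hfin] at *; omega
    have hne' : hfin.toFinset.Nonempty := by rwa [Set.Finite.toFinset_nonempty]
    set x := hfin.toFinset.max' hne' with hxdef
    have hxS : x ∈ S := by
      have := hfin.toFinset.max'_mem hne'
      rwa [Set.Finite.mem_toFinset] at this
    have hxmax : ∀ y ∈ S, y ≤ x := by
      intro y hy
      exact hfin.toFinset.le_max' y (by rwa [Set.Finite.mem_toFinset])
    -- choose c
    have hax : a < x := hxS.1.1
    have hxb : x ≤ b := hxS.1.2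
    obtain ⟨c, hac, hcx, hgap⟩ :
        ∃ c, a ≤ c ∧ c < x ∧ Set.Ioo c x ∩ support θ = ∅ := by
      by_cases hT : (S \ {x}).Nonempty
      · have hTfin : (S \ {x}).Finite := hfin.diff
        have hTne : hTfin.toFinset.Nonempty := by rwa [Set.Finite.toFinset_nonempty]
        set c := hTfin.toFinset.max' hTne with hcdef
        have hcT : c ∈ S \ {x} := by
          have := hTfin.toFinset.max'_mem hTne
          rwa [Set.Finite.mem_toFinset] at this
        have hcx : c < x := lt_of_le_of_ne (hxmax c hcT.1) hcT.2
        refine ⟨c, hcT.1.1.1.le, hcx, ?_⟩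
        ext y
        simp only [Set.mem_inter_iff, Set.mem_Ioo, Set.mem_empty_iff_false, iff_false]
        rintro ⟨⟨hy1, hy2⟩, hy3⟩
        have hyS : y ∈ S \ {x} := by
          refine ⟨⟨⟨lt_trans hcT.1.1.1 hy1, hy2.le.trans hxb⟩, hy3⟩, fun h => ?_⟩
          rw [Set.mem_singleton_iff] at h; exact absurd h (ne_of_lt hy2)
        have : y ≤ c := hTfin.toFinset.le_max' y (by rwa [Set.Finite.mem_toFinset])
        exact absurd this (not_le.2 hy1)
      · refine ⟨a, le_refl a, hax, ?_⟩
        ext y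
        simp only [Set.mem_inter_iff, Set.mem_Ioo, Set.mem_empty_iff_false, iff_false]
        rintro ⟨⟨hy1, hy2⟩, hy3⟩
        exact hT ⟨y, ⟨⟨hy1, hy2.le.trans hxb⟩, hy3⟩, by
          rw [Set.mem_singleton_iff]; exact ne_of_lt hy2⟩
    -- b-side emptiness
    have hgapxb : Set.Ioc x b ∩ support θ = ∅ := by
      ext y
      simp only [Set.mem_inter_iff, Set.mem_Ioc, Set.mem_empty_iff_false, iff_false]
      rintro ⟨⟨hy1, hy2⟩, hy3⟩
      have hyS : y ∈ S := ⟨⟨lt_trans hax hy1, hy2⟩, hy3⟩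
      exact absurd (hxmax y hyS) (not_le.2 hy1)
    have hΦbx : Φ b = Φ x := h1 x b hxb hgapxb
    -- split the sum at c
    have hsplit := finsum_Ioc_split f hac (hcx.le.trans hxb) (hfinf a c) (hfinf c b)
    -- the (c, b] part is a single term f x
    have hsingle : ∑ᶠ t ∈ Set.Ioc c b, f t = f x := by
      refine finsum_mem_eq_single ?_ ⟨hcx, hxb⟩
      rintro y ⟨⟨hy1, hy2⟩, hy3⟩
      have hyθ : y ∈ support θ := hsupp hy3
      rw [Set.mem_singleton_iff]
      by_contra hne
      rcases lt_or_gt_of_ne hne with hlt | hgt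
      · have : y ∈ Set.Ioo c x ∩ support θ := ⟨⟨hy1, hlt⟩, hyθ⟩
        rw [hgap] at this; exact this
      · have : y ∈ Set.Ioc x b ∩ support θ := ⟨⟨hgt, hy2⟩, hyθ⟩
        rw [hgapxb] at this; exact this
    -- f x in terms of Φ
    have hfx : Φ x - f x = Φ c := h2 c x hcx hgap
    -- the (a, c] part by induction
    have hcardac : (Set.Ioc a c ∩ support θ).ncard = k := by
      have hACeq : Set.Ioc a c ∩ support θ = S \ {x} := by
        ext y
        simp only [Set.mem_inter_iff, Set.mem_Ioc, Set.mem_diff, Set.mem_singleton_iff, hS]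
        constructor
        · rintro ⟨⟨hy1, hy2⟩, hy3⟩
          exact ⟨⟨⟨hy1, hy2.trans (hcx.le.trans hxb)⟩, hy3⟩, ne_of_lt (lt_of_le_of_lt hy2 hcx)⟩
        · rintro ⟨⟨⟨hy1, hy2⟩, hy3⟩, hy4⟩
          refine ⟨⟨hy1, ?_⟩, hy3⟩
          -- y ∈ S, y ≠ x ⇒ y ≤ c
          have hylt : y < x := lt_of_le_of_ne (hxmax y ⟨⟨hy1, hy2⟩, hy3⟩) hy4
          by_contra hyc
          push_neg at hyc
          have : y ∈ Set.Ioo c x ∩ support θ := ⟨⟨hyc, hylt⟩, hy3⟩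
          rw [hgap] at this; exact this
      rw [hACeq, Set.ncard_diff_singleton_of_mem hxS, hcard]
      omega
    have hih := ih a c hac hcardac
    rw [hsplit, hsingle, hih, hΦbx]
    omega


/-- A function `θ : ℝ → ℤ` with locally finite support is `n`-interlacing (`n ≥ 1`) iff it
is the sum of `n` functions with locally finite support, each `1`-interlacing. -/
theorem statement15 (θ : ℝ → ℤ) (hθ : HasLocallyFiniteSupport θ) (n : ℕ) (hn : 1 ≤ n) :
    IsInterlacing n θ ↔
      ∃ θs : Fin n → ℝ → ℤ,
        (∀ i, HasLocallyFiniteSupport (θs i)) ∧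
        (∀ i, IsInterlacing 1 (θs i)) ∧
        ∀ x : ℝ, θ x = ∑ i, θs i x := by
  constructor
  · intro h
    -- diameter bound
    have one : ∀ v u : ℝ, v ≤ u → |(Gf θ) u - (Gf θ) v| ≤ (n : ℤ) := by
      intro v u hvu
      obtain ⟨d, hud, hgap⟩ := exists_gap_right hθ u
      have h1 : ∑ᶠ t ∈ Set.Ioo u d, θ t = 0 := by
        apply finsum_mem_zero_of_empty
        rw [← hgap]
      have h2 := Gioo hθ hud
      have h3 := h v d (lt_of_le_of_lt hvu hud)
      rw [Gioo hθ (lt_of_le_of_lt hvu hud)] at h3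
      rw [abs_le] at h3 ⊢
      omega
    have diam : ∀ u v : ℝ, |(Gf θ) u - (Gf θ) v| ≤ (n : ℤ) := by
      intro u v
      rcases le_total v u with hvu | huv
      · exact one v u hvu
      · rw [abs_sub_comm]; exact one u v huv
    -- least value of (Gf θ)
    obtain ⟨m, hmP, hmle⟩ := Int.exists_least_of_bdd
      (P := fun z => ∃ x : ℝ, (Gf θ) x = z)
      ⟨(Gf θ) 0 - n, by
        rintro z ⟨x, rfl⟩
        have := diam 0 x
        rw [abs_le] at this
        omega⟩
      ⟨(Gf θ) 0, 0, rfl⟩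
    obtain ⟨x₀, hx₀⟩ := hmP
    have hm1 : ∀ x, m ≤ (Gf θ) x := fun x => hmle _ ⟨x, rfl⟩
    have hm2 : ∀ x, (Gf θ) x ≤ m + n := by
      intro x
      have := diam x x₀
      rw [abs_le] at this
      omega
    have hleft : ∀ x : ℝ, ∃ c, c < x ∧ (Gf θ) x - θ x = (Gf θ) c := by
      intro x
      obtain ⟨c, hcx, hgap⟩ := exists_gap_left hθ x
      have h1 : ∑ᶠ t ∈ Set.Ioo c x, θ t = 0 := by
        apply finsum_mem_zero_of_empty
        rw [← hgap]
      have h2 := Gioo hθ hcx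
      exact ⟨c, hcx, by omega⟩
    refine ⟨fun i x => clampZ ((Gf θ) x - m - (i : ℕ)) - clampZ ((Gf θ) x - θ x - m - (i : ℕ)),
      ?_, ?_, ?_⟩
    · -- locally finite support
      intro i K hK
      apply (hθ K hK).subset
      rintro x ⟨hx1, hx2⟩
      refine ⟨hx1, ?_⟩
      intro hx0
      apply hx2
      simp only [Function.mem_support] at *
      rw [hx0]
      ring_nf
    · -- 1-interlacing
      intro i a b hab
      have key := sum_eq_of_steps θ
        (fun x => clampZ ((Gf θ) x - m - (i : ℕ)) - clampZ ((Gf θ) x - θ x - m - (i : ℕ))) hθ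
        (by
          intro x hx
          simp only [Function.mem_support] at hx ⊢
          intro hx0
          apply hx
          rw [hx0]; ring_nf)
        (fun x => clampZ ((Gf θ) x - m - (i : ℕ)))
        (by
          intro c x hcx hemp
          have h0 : ∑ᶠ t ∈ Set.Ioc c x, θ t = 0 := finsum_mem_zero_of_empty (by rw [← hemp])
          have h1 := Gdiff hθ hcx
          have hxc : (Gf θ) x = (Gf θ) c := by omega
          show clampZ (Gf θ x - m - (i : ℕ)) = clampZ (Gf θ c - m - (i : ℕ))
          rw [hxc])
        (by
          intro c x hcx hemp
          have h0 : ∑ᶠ t ∈ Set.Ioo c x, θ t = 0 := finsum_mem_zero_of_empty (by rw [← hemp])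
          have h1 := Gioo hθ hcx
          have hGc : (Gf θ) x - θ x = (Gf θ) c := by omega
          show clampZ (Gf θ x - m - (i : ℕ)) -
            (clampZ (Gf θ x - m - (i : ℕ)) - clampZ (Gf θ x - θ x - m - (i : ℕ)))
            = clampZ (Gf θ c - m - (i : ℕ))
          rw [hGc]
          ring)
        a b hab.le
      have hfinf : (Set.Ioo a b ∩
          support (fun x => clampZ ((Gf θ) x - m - (i : ℕ)) - clampZ ((Gf θ) x - θ x - m - (i : ℕ)))).Finite := by
        apply (finite_Ioo hθ a b).subset
        apply Set.inter_subset_inter_right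
        intro x hx
        simp only [Function.mem_support] at hx ⊢
        intro hx0
        apply hx
        rw [hx0]; ring_nf
      have hsplit := finsum_Ioo_split _ hab hfinf
      rw [key] at hsplit
      -- sum over Ioo = clampZ ((Gf θ) b - θ b - m - i) - clampZ ((Gf θ) a - m - i)
      have : ∑ᶠ t ∈ Set.Ioo a b,
          (clampZ ((Gf θ) t - m - (i : ℕ)) - clampZ ((Gf θ) t - θ t - m - (i : ℕ)))
          = clampZ ((Gf θ) b - θ b - m - (i : ℕ)) - clampZ ((Gf θ) a - m - (i : ℕ)) := by omega
      rw [this, abs_le]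
      have c1 := clampZ_nonneg ((Gf θ) b - θ b - m - (i : ℕ))
      have c2 := clampZ_le_one ((Gf θ) b - θ b - m - (i : ℕ))
      have c3 := clampZ_nonneg ((Gf θ) a - m - (i : ℕ))
      have c4 := clampZ_le_one ((Gf θ) a - m - (i : ℕ))
      omega
    · -- sum equals θ
      intro x
      rw [Finset.sum_sub_distrib]
      have e1 : ∑ i : Fin n, clampZ ((Gf θ) x - m - (i : ℕ))
          = ∑ i ∈ Finset.range n, clampZ ((Gf θ) x - m - i) :=
        Fin.sum_univ_eq_sum_range (fun j => clampZ ((Gf θ) x - m - j)) n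
      have e2 : ∑ i : Fin n, clampZ ((Gf θ) x - θ x - m - (i : ℕ))
          = ∑ i ∈ Finset.range n, clampZ ((Gf θ) x - θ x - m - i) :=
        Fin.sum_univ_eq_sum_range (fun j => clampZ ((Gf θ) x - θ x - m - j)) n
      rw [e1, e2]
      rw [clampZ_sum n _ (by have := hm1 x; omega) (by have := hm2 x; omega)]
      obtain ⟨c, hcx, hGc⟩ := hleft x
      rw [clampZ_sum n _ (by have := hm1 c; omega) (by have := hm2 c; omega)]
      ring
  · -- converse
    rintro ⟨θs, hLF, hI, hsum⟩
    intro a b hab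
    have hfin : ∀ i, (Set.Ioo a b ∩ support (θs i)).Finite :=
      fun i => hLF i _ (Metric.isBounded_Ioo a b)
    have hU : (Set.Ioo a b ∩ ⋃ i, support (θs i)).Finite := by
      rw [Set.inter_iUnion]
      exact Set.finite_iUnion hfin
    set T : Finset ℝ := hU.toFinset with hT
    have hTs : ∀ i, ∑ᶠ x ∈ Set.Ioo a b, θs i x = ∑ x ∈ T, θs i x := by
      intro i
      apply finsum_mem_eq_sum_of_inter_support_eq
      ext y
      simp only [Set.mem_inter_iff, Finset.coe_sort_coe, Set.Finite.coe_toFinset, hT,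
        Set.mem_iUnion]
      constructor
      · rintro ⟨hy1, hy2⟩
        exact ⟨⟨hy1, ⟨i, hy2⟩⟩, hy2⟩
      · rintro ⟨⟨hy1, _⟩, hy2⟩
        exact ⟨hy1, hy2⟩
    have hTθ : ∑ᶠ x ∈ Set.Ioo a b, θ x = ∑ x ∈ T, θ x := by
      apply finsum_mem_eq_sum_of_inter_support_eq
      ext y
      simp only [Set.mem_inter_iff, Finset.coe_sort_coe, Set.Finite.coe_toFinset, hT,
        Set.mem_iUnion]
      constructor
      · rintro ⟨hy1, hy2⟩
        refine ⟨⟨hy1, ?_⟩, hy2⟩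
        by_contra hc
        push_neg at hc
        apply hy2
        simp only [Function.mem_support, not_not] at hc ⊢
        rw [hsum y]
        exact Finset.sum_eq_zero fun i _ => by
          have := hc i
          simpa [Function.mem_support, not_not] using this
      · rintro ⟨⟨hy1, _⟩, hy2⟩
        exact ⟨hy1, hy2⟩
    rw [hTθ]
    have : ∑ x ∈ T, θ x = ∑ i : Fin n, ∑ x ∈ T, θs i x := by
      rw [← Finset.sum_comm]
      exact Finset.sum_congr rfl fun x _ => hsum x
    rw [this]
    calc |∑ i : Fin n, ∑ x ∈ T, θs i x| ≤ ∑ i : Fin n, |∑ x ∈ T, θs i x| :=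
          Finset.abs_sum_le_sum_abs _ _
      _ ≤ ∑ _i : Fin n, (1 : ℤ) := by
          apply Finset.sum_le_sum
          intro i _
          have := hI i a b hab
          rwa [hTs i] at this
      _ = n := by simp
end

section
/- Let n ≥ 1 and let Q be a uniformly strict n×n matrix-valued Nevanlinna function meromorphic on ℂ. Then there exist n scalar Nevanlinna functions q₁, …, qₙ meromorphic on ℂ such that det Q(z) = q₁(z)·…·qₙ(z) as meromorphic functions (equality holding at every z at which Q and all the qⱼ are holomorphic). -/
open Matrix
open scoped ComplexOrder

/-- A scalar Nevanlinna function meromorphic on `ℂ`: meromorphic everywhere, holomorphic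
at every point of the open upper half-plane, with nonnegative imaginary part there. -/
def ScalarNevanlinna (q : ℂ → ℂ) : Prop :=
  MeromorphicOn q Set.univ ∧ ∀ z : ℂ, 0 < z.im → AnalyticAt ℂ q z ∧ 0 ≤ (q z).im

open Filter Topology

namespace Statement16Aux

lemma quad_eq {m : ℕ} (A : Matrix (Fin m) (Fin m) ℂ) (v : Fin m → ℂ) :
    star v ⬝ᵥ ((((2 : ℂ) * Complex.I)⁻¹ • (A - Aᴴ)) *ᵥ v)
      = (((star v ⬝ᵥ (A *ᵥ v)).im : ℂ)) := by
  have key : star v ⬝ᵥ (Aᴴ *ᵥ v) = (starRingEnd ℂ) (star v ⬝ᵥ (A *ᵥ v)) := by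
    simp only [dotProduct, mulVec, conjTranspose_apply, map_sum, _root_.map_mul, Pi.star_apply,
      Finset.mul_sum, Complex.star_def, Complex.conj_conj]
    rw [Finset.sum_comm]
    apply Finset.sum_congr rfl
    intro i _
    apply Finset.sum_congr rfl
    intro j _
    ring
  rw [smul_mulVec, dotProduct_smul, sub_mulVec, dotProduct_sub, key]
  rw [Complex.sub_conj]
  set s := star v ⬝ᵥ (A *ᵥ v)
  have hI : Complex.I ≠ 0 := Complex.I_ne_zero
  push_cast
  field_simp
  rw [smul_eq_mul, one_div, inv_mul_cancel_left₀ (mul_ne_zero two_ne_zero hI)]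

lemma det_ne_zero_of_posdef {m : ℕ} {A : Matrix (Fin m) (Fin m) ℂ}
    (hA : ((((2 : ℂ) * Complex.I)⁻¹ • (A - Aᴴ))).PosDef) : A.det ≠ 0 := by
  intro hdet
  obtain ⟨v, hv, hAv⟩ := (Matrix.exists_mulVec_eq_zero_iff).2 hdet
  have h1 := hA.dotProduct_mulVec_pos hv
  rw [quad_eq, hAv] at h1
  simp at h1

lemma sum_castLE {n j : ℕ} (h : j ≤ n) (G : Fin n → ℂ)
    (hG : ∀ i : Fin n, ¬ ((i : ℕ) < j) → G i = 0) :
    ∑ i, G i = ∑ a : Fin j, G (Fin.castLE h a) := by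
  have : ∑ a : Fin j, G (Fin.castLE h a) = ∑ i ∈ Finset.univ.map (Fin.castLEEmb h), G i :=
    (Finset.sum_map Finset.univ (Fin.castLEEmb h) G).symm
  rw [this]
  symm
  apply Finset.sum_subset (Finset.subset_univ _)
  intro i _ hi
  apply hG
  intro hlt
  exact hi (Finset.mem_map.2 ⟨⟨(i : ℕ), hlt⟩, Finset.mem_univ _, by simp [Fin.castLEEmb]⟩)

lemma posdef_submatrix_castLE {n j : ℕ} (h : j ≤ n) {M : Matrix (Fin n) (Fin n) ℂ}
    (hM : M.PosDef) : (M.submatrix (Fin.castLE h) (Fin.castLE h)).PosDef := by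
  refine posDef_iff_dotProduct_mulVec.mpr ⟨?_, ?_⟩
  · have h1 : (M.submatrix (Fin.castLE h) (Fin.castLE h))ᴴ
        = Mᴴ.submatrix (Fin.castLE h) (Fin.castLE h) := by
      ext a b; simp [conjTranspose_apply]
    rw [Matrix.IsHermitian, h1, hM.1]
  · intro x hx
    classical
    set y : Fin n → ℂ := fun i => if hi : (i : ℕ) < j then x ⟨(i : ℕ), hi⟩ else 0 with hy
    have hyc : ∀ a : Fin j, y (Fin.castLE h a) = x a := by
      intro a
      simp only [hy]
      rw [dif_pos (by exact a.isLt)]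
      congr 1
    have hy0 : y ≠ 0 := by
      intro h0
      apply hx
      funext a
      have := congrFun h0 (Fin.castLE h a)
      rwa [hyc a] at this
    have key : star x ⬝ᵥ ((M.submatrix (Fin.castLE h) (Fin.castLE h)) *ᵥ x)
        = star y ⬝ᵥ (M *ᵥ y) := by
      simp only [dotProduct, mulVec, Pi.star_apply, submatrix_apply]
      rw [sum_castLE h (fun i => star (y i) * ∑ i', M i i' * y i')
        (by intro i hi; simp [hy, dif_neg hi])]
      apply Finset.sum_congr rfl
      intro a _
      rw [hyc a]
      congr 1
      rw [sum_castLE h (fun i' => M (Fin.castLE h a) i' * y i')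
        (by intro i hi; simp [hy, dif_neg hi])]
      apply Finset.sum_congr rfl
      intro b _
      rw [hyc b]
    rw [key]
    exact hM.dotProduct_mulVec_pos hy0

lemma adjugate_last_last {m : ℕ} (A : Matrix (Fin (m + 1)) (Fin (m + 1)) ℂ) :
    A.adjugate (Fin.last m) (Fin.last m)
      = (A.submatrix Fin.castSucc Fin.castSucc).det := by
  rw [Matrix.adjugate_apply, Matrix.det_succ_row _ (Fin.last m)]
  rw [Finset.sum_eq_single (Fin.last m)]
  · simp only [Matrix.updateRow_self, Pi.single_eq_same]
    rw [Fin.succAbove_last]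
    have : (A.updateRow (Fin.last m) (Pi.single (Fin.last m) 1)).submatrix
        Fin.castSucc Fin.castSucc = A.submatrix Fin.castSucc Fin.castSucc := by
      ext a b
      simp [Matrix.updateRow_ne (Fin.castSucc_lt_last a).ne]
    rw [this]
    rw [Fin.val_last, Even.neg_one_pow ⟨m, rfl⟩, one_mul, one_mul]
  · intro b _ hb
    simp [Matrix.updateRow_self, Pi.single_eq_of_ne hb]
  · simp

lemma imM_submatrix {n j : ℕ} (h : j ≤ n) (M : Matrix (Fin n) (Fin n) ℂ)
    (hM : ((((2 : ℂ) * Complex.I)⁻¹ • (M - Mᴴ))).PosDef) :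
    ((((2 : ℂ) * Complex.I)⁻¹ • (M.submatrix (Fin.castLE h) (Fin.castLE h)
      - (M.submatrix (Fin.castLE h) (Fin.castLE h))ᴴ))).PosDef := by
  have key : (((2 : ℂ) * Complex.I)⁻¹ • (M.submatrix (Fin.castLE h) (Fin.castLE h)
      - (M.submatrix (Fin.castLE h) (Fin.castLE h))ᴴ))
      = (((2 : ℂ) * Complex.I)⁻¹ • (M - Mᴴ)).submatrix (Fin.castLE h) (Fin.castLE h) := by
    ext a b
    simp [Matrix.submatrix_apply, Matrix.smul_apply, Matrix.sub_apply,
      Matrix.conjTranspose_apply]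
  rw [key]
  exact posdef_submatrix_castLE h hM

lemma im_det_ratio_nonneg {m : ℕ} (A : Matrix (Fin (m + 1)) (Fin (m + 1)) ℂ)
    (hA : ((((2 : ℂ) * Complex.I)⁻¹ • (A - Aᴴ))).PosDef) :
    0 ≤ (A.det / (A.submatrix Fin.castSucc Fin.castSucc).det).im := by
  have hdet : A.det ≠ 0 := det_ne_zero_of_posdef hA
  have hsub : A.submatrix Fin.castSucc Fin.castSucc
      = A.submatrix (Fin.castLE (Nat.le_succ m)) (Fin.castLE (Nat.le_succ m)) := rfl
  have hA' := imM_submatrix (Nat.le_succ m) A hA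
  have hdet' : (A.submatrix Fin.castSucc Fin.castSucc).det ≠ 0 := by
    rw [hsub]; exact det_ne_zero_of_posdef hA'
  set c := A⁻¹ (Fin.last m) (Fin.last m) with hc
  have hcA : c * A.det = (A.submatrix Fin.castSucc Fin.castSucc).det := by
    rw [hc, Matrix.inv_def, Matrix.smul_apply, adjugate_last_last,
      Ring.inverse_eq_inv']
    field_simp
    rw [smul_eq_mul, ← mul_assoc, mul_one_div_cancel hdet, one_mul]
  have hc0 : c ≠ 0 := by
    intro h0
    rw [h0, zero_mul] at hcA
    exact hdet' hcA.symm
  set v := A⁻¹ *ᵥ Pi.single (Fin.last m) (1 : ℂ) with hv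
  have hAv : A *ᵥ v = Pi.single (Fin.last m) (1 : ℂ) := by
    rw [hv, Matrix.mulVec_mulVec, Matrix.mul_nonsing_inv _ (isUnit_iff_ne_zero.2 hdet),
      Matrix.one_mulVec]
  have hvlast : v (Fin.last m) = c := by
    simp [hv, Matrix.mulVec_single]
    exact hc.symm
  have hv0 : v ≠ 0 := by
    intro h0
    have := congrFun hAv (Fin.last m)
    rw [h0] at this
    simp at this
  have hp := hA.dotProduct_mulVec_pos hv0
  rw [quad_eq] at hp
  set s := star v ⬝ᵥ (A *ᵥ v) with hs
  have hsim : 0 < s.im := Complex.zero_lt_real.1 hp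
  have hsc : s = (starRingEnd ℂ) c := by
    rw [hs, hAv, dotProduct_single, mul_one, Pi.star_apply, ← hvlast]
    rfl
  have hcim : c.im < 0 := by
    have : s.im = -c.im := by rw [hsc, Complex.conj_im]
    linarith [this ▸ hsim]
  have hratio : A.det / (A.submatrix Fin.castSucc Fin.castSucc).det = c⁻¹ := by
    rw [← hcA]
    field_simp
  rw [hratio, Complex.inv_im]
  have hn : 0 < Complex.normSq c := Complex.normSq_pos.2 hc0
  apply div_nonneg <;> linarith

lemma meromorphicAt_sum {ι : Type*} (s : Finset ι) (f : ι → ℂ → ℂ) {x : ℂ}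
    (h : ∀ i ∈ s, MeromorphicAt (f i) x) :
    MeromorphicAt (fun z => ∑ i ∈ s, f i z) x := by
  classical
  induction s using Finset.induction_on with
  | empty => simpa using MeromorphicAt.const (0 : ℂ) x
  | @insert a t hnot ih =>
    have : (fun z => ∑ i ∈ insert a t, f i z)
        = fun z => f a z + ∑ i ∈ t, f i z := by
      funext z; rw [Finset.sum_insert hnot]
    rw [this]
    exact (h a (Finset.mem_insert_self a t)).add
      (ih fun i hi => h i (Finset.mem_insert_of_mem hi))

lemma meromorphicAt_prod {ι : Type*} (s : Finset ι) (f : ι → ℂ → ℂ) {x : ℂ}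
    (h : ∀ i ∈ s, MeromorphicAt (f i) x) :
    MeromorphicAt (fun z => ∏ i ∈ s, f i z) x := by
  classical
  induction s using Finset.induction_on with
  | empty => simpa using MeromorphicAt.const (1 : ℂ) x
  | @insert a t hnot ih =>
    have : (fun z => ∏ i ∈ insert a t, f i z)
        = fun z => f a z * ∏ i ∈ t, f i z := by
      funext z; rw [Finset.prod_insert hnot]
    rw [this]
    exact (h a (Finset.mem_insert_self a t)).mul
      (ih fun i hi => h i (Finset.mem_insert_of_mem hi))

lemma analyticAt_det {m : ℕ} (M : ℂ → Matrix (Fin m) (Fin m) ℂ) {z : ℂ}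
    (h : ∀ i j, AnalyticAt ℂ (fun w => M w i j) z) :
    AnalyticAt ℂ (fun w => (M w).det) z := by
  have : (fun w => (M w).det)
      = fun w => ∑ σ : Equiv.Perm (Fin m), (Equiv.Perm.sign σ : ℂ) * ∏ i, M w (σ i) i := by
    funext w; rw [Matrix.det_apply']
  rw [this]
  apply Finset.analyticAt_fun_sum
  intro σ _
  exact (analyticAt_const).mul (Finset.analyticAt_fun_prod _ fun i _ => h (σ i) i)

lemma meromorphicAt_det {m : ℕ} (M : ℂ → Matrix (Fin m) (Fin m) ℂ) {x : ℂ}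
    (h : ∀ i j, MeromorphicAt (fun w => M w i j) x) :
    MeromorphicAt (fun w => (M w).det) x := by
  have : (fun w => (M w).det)
      = fun w => ∑ σ : Equiv.Perm (Fin m), (Equiv.Perm.sign σ : ℂ) * ∏ i, M w (σ i) i := by
    funext w; rw [Matrix.det_apply']
  rw [this]
  apply meromorphicAt_sum
  intro σ _
  exact (MeromorphicAt.const _ x).mul (meromorphicAt_prod _ _ fun i _ => h (σ i) i)

lemma not_eventually_zero {f : ℂ → ℂ} (hm : ∀ x : ℂ, MeromorphicAt f x)
    {z₀ : ℂ} (ha : AnalyticAt ℂ f z₀) (h0 : f z₀ ≠ 0) (z : ℂ) :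
    ¬ (∀ᶠ w in 𝓝[≠] z, f w = 0) := by
  intro hz
  set E : Set ℂ := {x : ℂ | ∀ᶠ w in 𝓝[≠] x, f w = 0} with hE
  have hopen : IsOpen E := by
    rw [isOpen_iff_mem_nhds]
    intro x hx
    have hx' : ∀ᶠ w in 𝓝[≠] x, f w = 0 := hx
    rw [eventually_nhdsWithin_iff, eventually_nhds_iff] at hx'
    obtain ⟨t, ht, hto, hxt⟩ := hx'
    apply Filter.mem_of_superset (hto.mem_nhds hxt)
    intro y hy
    by_cases hyx : y = x
    · subst hyx; exact hx
    · show ∀ᶠ w in 𝓝[≠] y, f w = 0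
      apply Filter.Eventually.filter_mono nhdsWithin_le_nhds
      have hmem : t ∩ {x}ᶜ ∈ 𝓝 y :=
        (hto.inter isOpen_compl_singleton).mem_nhds ⟨hy, hyx⟩
      filter_upwards [hmem] with w hw
      exact ht w hw.1 hw.2
  have hsub : closure E ⊆ E := by
    intro x hxcl
    by_cases hxE : x ∈ E
    · exact hxE
    obtain ⟨m, hg⟩ := hm x
    have hfreq : ∃ᶠ w in 𝓝[≠] x, f w = 0 := by
      rw [Filter.frequently_iff]
      intro U hU
      rw [mem_nhdsWithin] at hU
      obtain ⟨t, hto, hxt, htU⟩ := hU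
      obtain ⟨y, hyt, hyE⟩ := mem_closure_iff.1 hxcl t hto hxt
      have hyx : y ≠ x := fun h => hxE (h ▸ hyE)
      have h1 : ∀ᶠ w in 𝓝[≠] y, f w = 0 := hyE
      have h2 : ∀ᶠ w in 𝓝[≠] y, w ∈ t :=
        Filter.Eventually.filter_mono nhdsWithin_le_nhds (hto.eventually_mem hyt)
      have h3 : ∀ᶠ w in 𝓝[≠] y, w ≠ x :=
        Filter.Eventually.filter_mono nhdsWithin_le_nhds
          (isOpen_compl_singleton.eventually_mem (by simpa using hyx))
      obtain ⟨w, hw⟩ := ((h1.and h2).and h3).exists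
      exact ⟨w, htU ⟨hw.1.2, hw.2⟩, hw.1.1⟩
    have hgfreq : ∃ᶠ w in 𝓝[≠] x, (w - x) ^ m • f w = 0 :=
      hfreq.mono fun w hw => by rw [hw, smul_zero]
    have hev := hg.frequently_zero_iff_eventually_zero.1 hgfreq
    show ∀ᶠ w in 𝓝[≠] x, f w = 0
    have hev' : ∀ᶠ w in 𝓝[≠] x, (w - x) ^ m • f w = 0 :=
      hev.filter_mono nhdsWithin_le_nhds
    filter_upwards [hev', self_mem_nhdsWithin] with w h1 h2
    have hwx : w ≠ x := h2
    rcases smul_eq_zero.1 h1 with h | h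
    · exact absurd h (pow_ne_zero _ (sub_ne_zero.2 hwx))
    · exact h
  have hclosed : IsClosed E := isClosed_of_closure_subset hsub
  have huniv : E = Set.univ := IsClopen.eq_univ ⟨hclosed, hopen⟩ ⟨z, hz⟩
  have hz₀ : ∀ᶠ w in 𝓝[≠] z₀, f w = 0 := by
    have : z₀ ∈ E := huniv ▸ Set.mem_univ z₀
    exact this
  have hne : ∀ᶠ w in 𝓝[≠] z₀, f w ≠ 0 :=
    (ha.continuousAt.eventually_ne h0).filter_mono nhdsWithin_le_nhds
  obtain ⟨w, h1, h2⟩ := (hz₀.and hne).exists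
  exact h2 h1

lemma prod_ratio {d : ℕ → ℂ} (h0 : d 0 = 1) :
    ∀ m : ℕ, (∀ k < m, d k ≠ 0) →
      ∏ j ∈ Finset.range m, (d (j + 1) / d j) = d m := by
  intro m
  induction m with
  | zero => intro _; simp [h0]
  | succ m ih =>
    intro h
    rw [Finset.prod_range_succ, ih (fun k hk => h k (Nat.lt_succ_of_lt hk))]
    rw [mul_div_cancel₀ _ (h m (Nat.lt_succ_self m))]

end Statement16Aux

open Statement16Aux

/-- Let `Q` be a uniformly strict `n×n` matrix-valued Nevanlinna function meromorphic on
`ℂ` (entrywise meromorphic, holomorphic on the upper half-plane, with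
`Im Q(z) = (Q(z) − Q(z)ᴴ)/(2i)` positive definite for `Im z > 0`).  Then there are `n`
scalar Nevanlinna functions `q₁, …, qₙ` meromorphic on `ℂ` with
`det Q(z) = q₁(z)⋯qₙ(z)` at every point where `Q` and all the `qⱼ` are holomorphic. -/
theorem statement16 (n : ℕ) (hn : 1 ≤ n) (Q : ℂ → Matrix (Fin n) (Fin n) ℂ)
    (hmero : ∀ i j, MeromorphicOn (fun z => Q z i j) Set.univ)
    (hanal : ∀ z : ℂ, 0 < z.im → ∀ i j, AnalyticAt ℂ (fun w => Q w i j) z)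
    (hpos : ∀ z : ℂ, 0 < z.im → (((2 : ℂ) * Complex.I)⁻¹ • (Q z - (Q z)ᴴ)).PosDef) :
    ∃ q : Fin n → ℂ → ℂ,
      (∀ j, ScalarNevanlinna (q j)) ∧
      ∀ z : ℂ, (∀ i j, AnalyticAt ℂ (fun w => Q w i j) z) →
        (∀ j, AnalyticAt ℂ (q j) z) → (Q z).det = ∏ j, q j z := by
  classical
  -- the sequence of leading principal minors
  set D : ℕ → ℂ → ℂ := fun j z =>
    if h : j ≤ n then ((Q z).submatrix (Fin.castLE h) (Fin.castLE h)).det else 1 with hD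
  have hDeq : ∀ (j : ℕ) (h : j ≤ n), D j
      = fun z => ((Q z).submatrix (Fin.castLE h) (Fin.castLE h)).det := by
    intro j h
    funext z
    simp [hD, dif_pos h]
  have hD0 : ∀ z, D 0 z = 1 := by
    intro z
    simp [hDeq 0 (Nat.zero_le n)]
  have hDn : ∀ z, D n z = (Q z).det := by
    intro z
    rw [hDeq n le_rfl]
    rfl
  -- meromorphy of the minors
  have hDmero : ∀ (j : ℕ) (h : j ≤ n) (x : ℂ), MeromorphicAt (D j) x := by
    intro j h x
    rw [hDeq j h]
    exact meromorphicAt_det (fun z => (Q z).submatrix (Fin.castLE h) (Fin.castLE h))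
      (fun a b => hmero (Fin.castLE h a) (Fin.castLE h b) x (Set.mem_univ x))
  -- analyticity of the minors at points where all entries are analytic
  have hDanal : ∀ (j : ℕ) (h : j ≤ n) (z : ℂ),
      (∀ i j, AnalyticAt ℂ (fun w => Q w i j) z) → AnalyticAt ℂ (D j) z := by
    intro j h z hz
    rw [hDeq j h]
    exact analyticAt_det (fun z => (Q z).submatrix (Fin.castLE h) (Fin.castLE h))
      (fun a b => hz (Fin.castLE h a) (Fin.castLE h b))
  -- nonvanishing of minors on the upper half-plane
  have hDne : ∀ (j : ℕ) (h : j ≤ n) (z : ℂ), 0 < z.im → D j z ≠ 0 := by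
    intro j h z hz
    rw [hDeq j h]
    exact det_ne_zero_of_posdef (imM_submatrix h (Q z) (hpos z hz))
  -- the scalar functions
  refine ⟨fun k z => D ((k : ℕ) + 1) z / D (k : ℕ) z, ?_, ?_⟩
  · intro k
    have hk1 : (k : ℕ) + 1 ≤ n := k.isLt
    have hk0 : (k : ℕ) ≤ n := Nat.le_of_succ_le hk1
    constructor
    · intro x _
      exact (hDmero _ hk1 x).div (hDmero _ hk0 x)
    · intro z hz
      have hentries := hanal z hz
      constructor
      · exact ((hDanal _ hk1 z hentries).div (hDanal _ hk0 z hentries)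
          (hDne _ hk0 z hz))
      · -- positivity of the imaginary part
        set A : Matrix (Fin ((k : ℕ) + 1)) (Fin ((k : ℕ) + 1)) ℂ :=
          (Q z).submatrix (Fin.castLE hk1) (Fin.castLE hk1) with hA
        have hApos : ((((2 : ℂ) * Complex.I)⁻¹ • (A - Aᴴ))).PosDef :=
          imM_submatrix hk1 (Q z) (hpos z hz)
        have h1 : D ((k : ℕ) + 1) z = A.det := by rw [hDeq _ hk1]
        have h2 : D (k : ℕ) z = (A.submatrix Fin.castSucc Fin.castSucc).det := by
          rw [hDeq _ hk0]
          rfl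
        show 0 ≤ (D ((k : ℕ) + 1) z / D (k : ℕ) z).im
        rw [h1, h2]
        exact im_det_ratio_nonneg A hApos
  · -- the determinant identity
    intro z hz1 hz2
    have hDanalz : ∀ (j : ℕ), j ≤ n → AnalyticAt ℂ (D j) z := fun j h => hDanal j h z hz1
    -- step: zeros propagate upwards
    have step : ∀ k : ℕ, k < n → D k z = 0 → D (k + 1) z = 0 := by
      intro k hk hk0
      by_contra hne1
      have hkn : k ≤ n := le_of_lt hk
      have hk1n : k + 1 ≤ n := hk
      have hIanal : AnalyticAt ℂ (D k) Complex.I :=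
        hDanal k hkn Complex.I (hanal Complex.I (by simp) )
      have hIne : D k Complex.I ≠ 0 := hDne k hkn Complex.I (by simp)
      have hnev : ¬ (∀ᶠ w in 𝓝[≠] z, D k w = 0) :=
        not_eventually_zero (hDmero k hkn) hIanal hIne z
      have hevne : ∀ᶠ w in 𝓝[≠] z, D k w ≠ 0 := by
        rcases (hDanalz k hkn).eventually_eq_zero_or_eventually_ne_zero with h | h
        · exact absurd (h.filter_mono nhdsWithin_le_nhds) hnev
        · exact h
      -- q_k · D k = D (k+1) near z
      have hq : AnalyticAt ℂ (fun w => D (k + 1) w / D k w) z := by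
        have := hz2 ⟨k, hk⟩
        simpa using this
      have t1 : Filter.Tendsto (fun w => (D (k + 1) w / D k w) * D k w) (𝓝[≠] z)
          (𝓝 ((D (k + 1) z / D k z) * D k z)) :=
        ((hq.continuousAt.mul (hDanalz k hkn).continuousAt).tendsto).mono_left
          nhdsWithin_le_nhds
      have t1' : Filter.Tendsto (fun w => (D (k + 1) w / D k w) * D k w) (𝓝[≠] z)
          (𝓝 0) := by
        rw [hk0, mul_zero] at t1
        exact t1
      have hcongr : ∀ᶠ w in 𝓝[≠] z,
          (D (k + 1) w / D k w) * D k w = D (k + 1) w := by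
        filter_upwards [hevne] with w hw
        exact div_mul_cancel₀ _ hw
      have t2 : Filter.Tendsto (D (k + 1)) (𝓝[≠] z) (𝓝 0) :=
        t1'.congr' hcongr
      have t3 : Filter.Tendsto (D (k + 1)) (𝓝[≠] z) (𝓝 (D (k + 1) z)) :=
        (hDanalz (k + 1) hk1n).continuousAt.tendsto.mono_left nhdsWithin_le_nhds
      exact hne1 (tendsto_nhds_unique t3 t2)
    -- chain of zeros
    have chain : ∀ k m : ℕ, k ≤ m → m ≤ n → D k z = 0 → D m z = 0 := by
      intro k m hkm hmn h0
      induction m, hkm using Nat.le_induction with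
      | base => exact h0
      | succ m hkm ih =>
        exact step m (Nat.lt_of_succ_le hmn) (ih (Nat.le_of_succ_le hmn))
    by_cases hall : ∀ k : ℕ, k < n → D k z ≠ 0
    · -- telescoping product
      have hprod : ∏ j : Fin n, (D ((j : ℕ) + 1) z / D (j : ℕ) z)
          = ∏ j ∈ Finset.range n, (D (j + 1) z / D j z) :=
        Fin.prod_univ_eq_prod_range (fun j => D (j + 1) z / D j z) n
      rw [hprod, prod_ratio (hD0 z) n hall, hDn z]
    · push_neg at hall
      obtain ⟨k, hkn, hk0⟩ := hall
      have hk1 : 1 ≤ k := by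
        by_contra h
        push_neg at h
        interval_cases k
        exact (by rw [hD0 z] at hk0; exact one_ne_zero hk0)
      have hDnz : D n z = 0 := chain k n (le_of_lt hkn) le_rfl hk0
      have hke : k - 1 + 1 = k := Nat.succ_pred_eq_of_pos hk1
      have hterm : D ((k - 1 : ℕ) + 1) z / D (k - 1 : ℕ) z = 0 := by
        rw [hke, hk0, zero_div]
      have hk1n : k - 1 < n := lt_of_le_of_lt (Nat.pred_le k) hkn
      have hQ0 : (Q z).det = 0 := by rw [← hDn z]; exact hDnz
      rw [hQ0]
      exact (Finset.prod_eq_zero (Finset.mem_univ (⟨k - 1, hk1n⟩ : Fin n))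
        (by simpa using hterm)).symm
end

section
/- Let H be a nonzero complex Hilbert space and T a densely defined closed simple symmetric operator in H. Let U be a unitary operator on H that is a symmetry of T, i.e. U(D(T)) = D(T) and T(Ux) = U(Tx) for every x ∈ D(T). If c ∈ ℂ is such that Ux − c·x ∈ D(T) for every x ∈ D(T*), then |c| = 1 and U = c·Id on H. -/
noncomputable section

open Complex

variable {H : Type*} [NormedAddCommGroup H] [InnerProductSpace ℂ H] [CompleteSpace H]

/-- Let `T` be a densely defined closed simple symmetric operator in a nonzero Hilbert
space `H` and `U` a unitary symmetry of `T` (`U(D(T)) = D(T)` and `TU = UT` on `D(T)`).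
If `c ∈ ℂ` is such that `Ux − c·x ∈ D(T)` for every `x ∈ D(T*)`, then `|c| = 1` and
`U = c·Id` on `H`. -/
theorem statement17 [Nontrivial H] (T : H →ₗ.[ℂ] H)
    (hdense : Dense (T.domain : Set H))
    (hclosed : IsClosed (T.graph : Set (H × H)))
    (hsymm : ∀ x y : T.domain, (inner ℂ (T x) ((y : H)) : ℂ) = inner ℂ ((x : H)) (T y))
    (hsimple : Dense ((⨆ lam ∈ {z : ℂ | z.im ≠ 0}, defect T lam : Submodule ℂ H) : Set H))
    (U : H ≃ₗᵢ[ℂ] H)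
    (hUdom : ∀ x : H, x ∈ T.domain ↔ U x ∈ T.domain)
    (hUT : ∀ x : T.domain, T ⟨U (x : H), (hUdom (x : H)).mp x.2⟩ = U (T x))
    (c : ℂ)
    (hc : ∀ x : T.adjoint.domain, U (x : H) - c • (x : H) ∈ T.domain) :
    ‖c‖ = 1 ∧ ∀ x : H, U x = c • x := by
  have hTle : T ≤ T.adjoint :=
    LinearPMap.IsFormalAdjoint.le_adjoint hdense (hsymm : T.IsFormalAdjoint T)
  -- key inner product identity for U commuting with the adjoint
  have key : ∀ (y : T.adjoint.domain) (x : T.domain),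
      (inner ℂ (U (T.adjoint y)) ((x : H)) : ℂ) = inner ℂ (U ((y : H))) (T x) := by
    intro y x
    have hx' : U.symm ((x : H)) ∈ T.domain := by
      rw [hUdom]
      simpa using x.2
    have hTx' : T ⟨U.symm ((x : H)), hx'⟩ = U.symm (T x) := by
      have h := hUT ⟨U.symm ((x : H)), hx'⟩
      have e : (⟨U ((⟨U.symm ((x : H)), hx'⟩ : T.domain) : H),
          (hUdom _).mp hx'⟩ : T.domain) = x :=
        Subtype.ext (U.apply_symm_apply _)
      rw [e] at h
      rw [h, U.symm_apply_apply]
    calc (inner ℂ (U (T.adjoint y)) ((x : H)) : ℂ)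
        = inner ℂ (U (T.adjoint y)) (U (U.symm ((x : H)))) := by rw [U.apply_symm_apply]
      _ = inner ℂ (T.adjoint y) (U.symm ((x : H))) := U.inner_map_map _ _
      _ = inner ℂ ((y : H)) (T ⟨U.symm ((x : H)), hx'⟩) :=
          LinearPMap.adjoint_isFormalAdjoint hdense y ⟨U.symm ((x : H)), hx'⟩
      _ = inner ℂ ((y : H)) (U.symm (T x)) := by rw [hTx']
      _ = inner ℂ (U ((y : H))) (T x) := by
          rw [← U.inner_map_map ((y : H)), U.apply_symm_apply]
  have hmem : ∀ y : T.adjoint.domain, U ((y : H)) ∈ T.adjoint.domain := fun y =>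
    LinearPMap.mem_adjoint_domain_of_exists _ ⟨U (T.adjoint y), key y⟩
  have happ : ∀ y : T.adjoint.domain, T.adjoint ⟨U ((y : H)), hmem y⟩ = U (T.adjoint y) :=
    fun y => LinearPMap.adjoint_apply_eq hdense _ (key y)
  -- on each defect subspace, U acts as c
  have hdef : ∀ lam : ℂ, lam.im ≠ 0 → ∀ x ∈ defect T lam, U x = c • x := by
    intro lam hlam x hx
    obtain ⟨v, hv, rfl⟩ := hx
    have hv' : T.adjoint v = lam • ((v : H)) := by
      simp only [SetLike.mem_coe, LinearMap.mem_ker, LinearMap.sub_apply,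
        LinearMap.smul_apply, Submodule.subtype_apply, sub_eq_zero] at hv
      exact hv
    have hv'' : T.adjoint ⟨U ((v : H)), hmem v⟩ = lam • U ((v : H)) := by
      rw [happ v, hv', map_smul]
    have hyT : U ((v : H)) - c • ((v : H)) ∈ T.domain := hc v
    have hy' : U ((v : H)) - c • ((v : H)) ∈ T.adjoint.domain :=
      Submodule.sub_mem _ (hmem v) (Submodule.smul_mem _ c v.2)
    have hsub : T.adjoint ⟨U ((v : H)) - c • ((v : H)), hy'⟩
        = lam • (U ((v : H)) - c • ((v : H))) := by
      have e : (⟨U ((v : H)) - c • ((v : H)), hy'⟩ : T.adjoint.domain)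
          = ⟨U ((v : H)), hmem v⟩ - c • v := rfl
      rw [e, LinearPMap.map_sub, LinearPMap.map_smul, hv'', hv', smul_sub, smul_comm]
    have hTy : T ⟨U ((v : H)) - c • ((v : H)), hyT⟩
        = lam • (U ((v : H)) - c • ((v : H))) := by
      rw [hTle.2 (x := ⟨_, hyT⟩) (y := ⟨_, hy'⟩) rfl, hsub]
    have h1 := hsymm ⟨_, hyT⟩ ⟨_, hyT⟩
    rw [hTy, inner_smul_left, inner_smul_right] at h1
    have hy0 : U ((v : H)) - c • ((v : H)) = 0 := by
      by_contra hne
      have hy2 : (inner ℂ (U ((v : H)) - c • ((v : H))) (U ((v : H)) - c • ((v : H))) : ℂ) ≠ 0 := by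
        simpa [inner_self_eq_zero] using hne
      exact hlam (Complex.conj_eq_iff_im.mp (mul_right_cancel₀ hy2 h1))
    have := sub_eq_zero.mp hy0
    simpa using this
  -- the set where U = c • id is a closed submodule
  set S : Submodule ℂ H := LinearMap.ker ((U.toLinearEquiv : H →ₗ[ℂ] H) - c • LinearMap.id)
    with hSdef
  have hS : ∀ x : H, x ∈ S ↔ U x = c • x := by
    intro x
    simp [hSdef, LinearMap.mem_ker, LinearMap.sub_apply, sub_eq_zero]
  have hsup : (⨆ lam ∈ {z : ℂ | z.im ≠ 0}, defect T lam) ≤ S := by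
    refine iSup₂_le fun lam hlam => ?_
    intro x hx
    exact (hS x).mpr (hdef lam hlam x hx)
  have hclosedS : IsClosed (S : Set H) := by
    have e : (S : Set H) = {x : H | U x = c • x} := by
      ext z; simpa using hS z
    rw [e]
    exact isClosed_eq U.continuous (continuous_const.smul continuous_id)
  have hallx : ∀ x : H, U x = c • x := by
    intro x
    have hx : x ∈ closure ((⨆ lam ∈ {z : ℂ | z.im ≠ 0}, defect T lam : Submodule ℂ H) : Set H) := by
      rw [hsimple.closure_eq]; trivial
    have hx2 : x ∈ closure (S : Set H) := closure_mono hsup hx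
    rw [hclosedS.closure_eq] at hx2
    exact (hS x).mp hx2
  refine ⟨?_, hallx⟩
  obtain ⟨x, hx⟩ := exists_ne (0 : H)
  have h1 : ‖U x‖ = ‖x‖ := U.norm_map x
  rw [hallx x, norm_smul] at h1
  have hxn : ‖x‖ ≠ 0 := norm_ne_zero_iff.mpr hx
  field_simp at h1
  exact h1

end
end

section
/- Let H be a complex Hilbert space and T a densely defined closed simple symmetric operator in H. Let a, b, c, d be real numbers with ad − bc = 1, and define G := {(c·Tx + d·x, a·Tx + b·x) : x ∈ D(T)} ⊆ H × H. Then: (1) for x ∈ D(T), c·Tx + d·x = 0 implies x = 0, so G is the graph of a linear operator S with domain {c·Tx + d·x : x ∈ D(T)}; (2) S is symmetric, i.e. ⟨Su, v⟩ = ⟨u, Sv⟩ for all u, v in the domain of S; (3) G is closed in H × H; and (4) S is simple in the relation sense: the closed linear span of the union over all μ ∈ ℂ with Im μ ≠ 0 of {u ∈ H : (u, μ·u) ∈ G^⊛} equals H, where G^⊛ := {(u,v) ∈ H × H : ⟨y, u⟩ = ⟨x, v⟩ for all (x,y) ∈ G}. -/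
noncomputable section

open Complex

variable {H : Type*} [NormedAddCommGroup H] [InnerProductSpace ℂ H] [CompleteSpace H]

/-- The Möbius transform graph `G = {(c·Tx + d·x, a·Tx + b·x) : x ∈ D(T)}`. -/
def mobiusGraph (T : H →ₗ.[ℂ] H) (a b c d : ℝ) : Set (H × H) :=
  {p : H × H | ∃ x : T.domain,
    p = ((c : ℂ) • T x + (d : ℂ) • (x : H), (a : ℂ) • T x + (b : ℂ) • (x : H))}

/-- The adjoint linear relation `G^⊛ = {(u,v) : ⟨y,u⟩ = ⟨x,v⟩ for all (x,y) ∈ G}`. -/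
def relAdjoint (G : Set (H × H)) : Set (H × H) :=
  {p : H × H | ∀ q ∈ G, (inner ℂ q.2 p.1 : ℂ) = inner ℂ q.1 p.2}

lemma mem_defect_iff (T : H →ₗ.[ℂ] H) (lam : ℂ) (u : H) :
    u ∈ defect T lam ↔ ∃ ξ : T.adjoint.domain, T.adjoint ξ = lam • (ξ : H) ∧ (ξ : H) = u := by
  simp only [defect, Submodule.mem_map, LinearMap.mem_ker, LinearMap.sub_apply,
    LinearMap.smul_apply, Submodule.coe_subtype, sub_eq_zero]
  rfl

lemma eig_zero (T : H →ₗ.[ℂ] H) (hdense : Dense (T.domain : Set H))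
    (hsimple : Dense ((⨆ lam ∈ {z : ℂ | z.im ≠ 0}, defect T lam : Submodule ℂ H) : Set H))
    (r : ℝ) (x : T.domain) (hx : T x = (r : ℂ) • (x : H)) : (x : H) = 0 := by
  have hle : (⨆ lam ∈ {z : ℂ | z.im ≠ 0}, defect T lam : Submodule ℂ H)
      ≤ (ℂ ∙ (x : H))ᗮ := by
    refine iSup₂_le fun lam hlam => fun u hu => ?_
    rw [Submodule.mem_orthogonal_singleton_iff_inner_right]
    obtain ⟨ξ, hξ, rfl⟩ := (mem_defect_iff T lam _).mp hu
    have h := (LinearPMap.adjoint_isFormalAdjoint hdense) ξ x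
    rw [hξ, hx, inner_smul_left, inner_smul_right] at h
    have h2 : ((starRingEnd ℂ) lam - (r : ℂ)) * (inner ℂ ((ξ : H)) ((x : H)) : ℂ) = 0 := by
      rw [sub_mul, h]; ring
    rcases mul_eq_zero.mp h2 with h3 | h3
    · exfalso
      apply hlam
      have h4 := sub_eq_zero.mp h3
      have := congrArg Complex.im h4
      simpa using this
    · rw [← inner_conj_symm, h3, map_zero]
  have hd : Dense (((ℂ ∙ (x : H))ᗮ : Submodule ℂ H) : Set H) := hsimple.mono hle
  have hxmem : (x : H) ∈ (ℂ ∙ (x : H))ᗮ := by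
    have hcl := (Submodule.isClosed_orthogonal (ℂ ∙ (x : H))).closure_eq
    rw [hd.closure_eq] at hcl
    rw [← SetLike.mem_coe, ← hcl]
    trivial
  exact inner_self_eq_zero.mp (Submodule.mem_orthogonal_singleton_iff_inner_right.mp hxmem)

/-- Let `T` be a densely defined closed simple symmetric operator, `a,b,c,d ∈ ℝ` with
`ad − bc = 1`, and `G = {(c·Tx + d·x, a·Tx + b·x) : x ∈ D(T)}`.  Then (1) `cTx + dx = 0`
implies `x = 0`, and `G` is the graph of an operator `S`; (2) `S` is symmetric;
(3) `G` is closed; (4) `S` is simple in the relation sense: the closed linear span of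
`⋃_{Im μ ≠ 0} {u : (u, μu) ∈ G^⊛}` is all of `H`. -/
theorem statement18 (T : H →ₗ.[ℂ] H)
    (hdense : Dense (T.domain : Set H))
    (hclosed : IsClosed (T.graph : Set (H × H)))
    (hsymm : ∀ x y : T.domain, (inner ℂ (T x) ((y : H)) : ℂ) = inner ℂ ((x : H)) (T y))
    (hsimple : Dense ((⨆ lam ∈ {z : ℂ | z.im ≠ 0}, defect T lam : Submodule ℂ H) : Set H))
    (a b c d : ℝ) (hdet : a * d - b * c = 1) :
    ((∀ x : T.domain, (c : ℂ) • T x + (d : ℂ) • (x : H) = 0 → (x : H) = 0) ∧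
      ∀ p ∈ mobiusGraph T a b c d, ∀ q ∈ mobiusGraph T a b c d,
        p.1 = q.1 → p.2 = q.2) ∧
    (∀ p ∈ mobiusGraph T a b c d, ∀ q ∈ mobiusGraph T a b c d,
      (inner ℂ p.2 q.1 : ℂ) = inner ℂ p.1 q.2) ∧
    IsClosed (mobiusGraph T a b c d) ∧
    Dense ((⨆ mu ∈ {z : ℂ | z.im ≠ 0},
        Submodule.span ℂ {u : H | (u, mu • u) ∈ relAdjoint (mobiusGraph T a b c d)} :
      Submodule ℂ H) : Set H) := by
  have hdetC : (a : ℂ) * d - (b : ℂ) * c = 1 := by exact_mod_cast hdet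
  -- Part (1a)
  have part1a : ∀ x : T.domain, (c : ℂ) • T x + (d : ℂ) • (x : H) = 0 → (x : H) = 0 := by
    intro x hx
    by_cases hc : c = 0
    · have hd0 : d ≠ 0 := by
        intro hd0; rw [hc, hd0] at hdet; simp at hdet
      have h0 : (d : ℂ) • (x : H) = 0 := by simpa [hc] using hx
      rcases smul_eq_zero.mp h0 with h | h
      · exact absurd (by exact_mod_cast h) hd0
      · exact h
    · have hcC : (c : ℂ) ≠ 0 := by exact_mod_cast hc
      have h1 : (c : ℂ) • T x = (-(d : ℂ)) • (x : H) := by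
        rw [neg_smul]
        exact eq_neg_of_add_eq_zero_left hx
      have hTx : T x = ((-(d / c) : ℝ) : ℂ) • (x : H) := by
        calc T x = (c : ℂ)⁻¹ • ((c : ℂ) • T x) := (inv_smul_smul₀ hcC _).symm
        _ = (c : ℂ)⁻¹ • ((-(d : ℂ)) • (x : H)) := by rw [h1]
        _ = ((-(d / c) : ℝ) : ℂ) • (x : H) := by
            rw [smul_smul]
            congr 1
            push_cast
            field_simp
      exact eig_zero T hdense hsimple _ x hTx
  -- Part (1b)
  have part1b : ∀ p ∈ mobiusGraph T a b c d, ∀ q ∈ mobiusGraph T a b c d,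
      p.1 = q.1 → p.2 = q.2 := by
    rintro p ⟨x, rfl⟩ q ⟨y, rfl⟩ h1
    simp only at h1 ⊢
    have hz : (c : ℂ) • T (x - y) + (d : ℂ) • ((x - y : T.domain) : H) = 0 := by
      rw [T.map_sub]
      have hco : ((x - y : T.domain) : H) = (x : H) - (y : H) := rfl
      rw [hco, smul_sub, smul_sub]
      calc (c : ℂ) • T x - (c : ℂ) • T y + ((d : ℂ) • (x : H) - (d : ℂ) • (y : H))
          = ((c : ℂ) • T x + (d : ℂ) • (x : H)) - ((c : ℂ) • T y + (d : ℂ) • (y : H)) := by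
            abel
        _ = 0 := sub_eq_zero.mpr h1
    have hxy : ((x - y : T.domain) : H) = 0 := part1a _ hz
    have hxy' : x = y := by
      apply Subtype.ext
      have hco : ((x - y : T.domain) : H) = (x : H) - (y : H) := rfl
      rw [hco] at hxy
      exact sub_eq_zero.mp hxy
    rw [hxy']
  -- Part (2)
  have part2 : ∀ p ∈ mobiusGraph T a b c d, ∀ q ∈ mobiusGraph T a b c d,
      (inner ℂ p.2 q.1 : ℂ) = inner ℂ p.1 q.2 := by
    rintro p ⟨x, rfl⟩ q ⟨y, rfl⟩
    simp only [inner_add_left, inner_add_right, inner_smul_left, inner_smul_right,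
      Complex.conj_ofReal]
    have h1 := hsymm x y
    linear_combination ((a : ℂ) * d - (b : ℂ) * c) * h1
  -- Part (3)
  have part3 : IsClosed (mobiusGraph T a b c d) := by
    have hg : Continuous (fun p : H × H =>
        ((a : ℂ) • p.1 - (c : ℂ) • p.2, -(b : ℂ) • p.1 + (d : ℂ) • p.2)) := by
      fun_prop
    have heq : mobiusGraph T a b c d = (fun p : H × H =>
        ((a : ℂ) • p.1 - (c : ℂ) • p.2, -(b : ℂ) • p.1 + (d : ℂ) • p.2)) ⁻¹'
        (T.graph : Set (H × H)) := by
      ext p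
      constructor
      · rintro ⟨x, rfl⟩
        simp only [Set.mem_preimage, SetLike.mem_coe, LinearPMap.mem_graph_iff]
        refine ⟨x, ?_, ?_⟩
        · (match_scalars <;> first | linear_combination hdetC | linear_combination 2*hdetC | linear_combination -hdetC | linear_combination -2*hdetC | ring1)
        · (match_scalars <;> first | linear_combination hdetC | linear_combination 2*hdetC | linear_combination -hdetC | linear_combination -2*hdetC | ring1)
      · intro hp
        simp only [Set.mem_preimage, SetLike.mem_coe, LinearPMap.mem_graph_iff] at hp
        obtain ⟨x, hx1, hx2⟩ := hp
        refine ⟨x, ?_⟩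
        have hp1 : (x : H) = (a : ℂ) • p.1 - (c : ℂ) • p.2 := hx1
        have hp2 : T x = -(b : ℂ) • p.1 + (d : ℂ) • p.2 := hx2
        ext
        · show p.1 = (c : ℂ) • T x + (d : ℂ) • (x : H)
          rw [hp1, hp2]
          (match_scalars <;> first | linear_combination hdetC | linear_combination 2*hdetC | linear_combination -hdetC | linear_combination -2*hdetC | ring1)
        · show p.2 = (a : ℂ) • T x + (b : ℂ) • (x : H)
          rw [hp1, hp2]
          (match_scalars <;> first | linear_combination hdetC | linear_combination 2*hdetC | linear_combination -hdetC | linear_combination -2*hdetC | ring1)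
    rw [heq]
    exact hclosed.preimage hg
  -- Part (4)
  refine ⟨⟨part1a, part1b⟩, part2, part3, ?_⟩
  apply hsimple.mono
  apply SetLike.coe_subset_coe.mpr
  refine iSup₂_le fun lam hlam => ?_
  have hcd : (c : ℂ) * lam + d ≠ 0 := by
    intro h
    have him := congrArg Complex.im h
    simp at him
    have hc0 : c = 0 := by
      rcases him with h' | h'
      · exact h'
      · exact absurd h' hlam
    have hre := congrArg Complex.re h
    simp [hc0] at hre
    rw [hc0, hre] at hdet
    simp at hdet
  obtain ⟨mu, hmu_im, hmu_mul⟩ : ∃ mu : ℂ,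
      mu.im ≠ 0 ∧ mu * ((c : ℂ) * lam + d) = (a : ℂ) * lam + b := by
    refine ⟨((a : ℂ) * lam + b) / ((c : ℂ) * lam + d), ?_, div_mul_cancel₀ _ hcd⟩
    have hns : Complex.normSq ((c : ℂ) * lam + d) ≠ 0 := by
      simpa [Complex.normSq_eq_zero] using hcd
    have him : (((a : ℂ) * lam + b) / ((c : ℂ) * lam + d)).im
        = lam.im / Complex.normSq ((c : ℂ) * lam + d) := by
      rw [Complex.div_im, ← sub_div]
      congr 1
      simp only [Complex.add_im, Complex.add_re, Complex.mul_im, Complex.mul_re,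
        Complex.ofReal_re, Complex.ofReal_im]
      ring_nf
      linear_combination lam.im * hdet
    rw [him]
    exact div_ne_zero hlam hns
  have hsub : defect T lam ≤
      Submodule.span ℂ {u : H | (u, mu • u) ∈ relAdjoint (mobiusGraph T a b c d)} := by
    intro u hu
    apply Submodule.subset_span
    obtain ⟨ξ, hξ, rfl⟩ := (mem_defect_iff T lam u).mp hu
    rintro q ⟨x, rfl⟩
    simp only
    have h := (LinearPMap.adjoint_isFormalAdjoint hdense) ξ x
    rw [hξ, inner_smul_left] at h
    -- h : conj lam * ⟪ξ, x⟫ = ⟪ξ, T x⟫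
    have hTxu : (inner ℂ (T x) ((ξ : H)) : ℂ) = lam * inner ℂ ((x : H)) ((ξ : H)) := by
      have := congrArg (starRingEnd ℂ) h
      simpa [inner_conj_symm, mul_comm] using this.symm
    simp only [inner_add_left, inner_smul_left, inner_smul_right, Complex.conj_ofReal, hTxu]
    linear_combination (-(inner ℂ ((x : H)) ((ξ : H)) : ℂ)) * hmu_mul
  exact le_trans hsub (le_iSup₂_of_le mu hmu_im le_rfl)

end
end
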